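/- arXiv:1104.5297 — 4 statements merged into one kernel-verified Lean document; each statement's English description precedes it below -/
import Mathlib

section
/- For a Pólya urn started with b black and w white balls (b > w ≥ 1), where at each step a ball is drawn uniformly at random and replaced together with an additional ball of the same color, the probability that at some finite time the urn contains equally many black and white balls equals 2·F(1/2), where F is the cumulative distribution function of the Beta(b, w) distribution. -/
open MeasureTheory ProbabilityTheory Filter

/-- The density of the Beta(b,w) distribution. -/
noncomputable def betaDensity (b w : ℕ) (p : ℝ) : ℝ :=
  Real.Gamma (b + w) / (Real.Gamma b * Real.Gamma w) * p ^ (b - 1) * (1 - p) ^ (w - 1)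

/-- The CDF of the Beta(b,w) distribution. -/
noncomputable def betaCDF (b w : ℕ) (x : ℝ) : ℝ :=
  ∫ p in Set.Ioo (0 : ℝ) x, betaDensity b w p

/-- The event that the first draws are exactly the sequence `ε` (`true` = black). -/
def drawsEq {Ω : Type*} (X : ℕ → Ω → Bool) (ε : List Bool) : Set Ω :=
  {ω | List.ofFn (fun i : Fin ε.length => X (i : ℕ) ω) = ε}

/-- `X` is the draw process of a Pólya urn started with `b` black and `w` white balls:
given any history `ε` of draws, the next ball drawn is black with probability
(current number of black balls)/(current total number of balls). -/
def IsPolyaUrn {Ω : Type*} [MeasurableSpace Ω] (P : Measure Ω)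
    (X : ℕ → Ω → Bool) (b w : ℕ) : Prop :=
  (∀ i, Measurable (X i)) ∧
  ∀ ε : List Bool,
    P (drawsEq X (ε ++ [true])) =
      ENNReal.ofReal (((b : ℝ) + ε.count true) / ((b : ℝ) + w + ε.length)) *
        P (drawsEq X ε)

/-- Number of black balls in the urn after `n` draws. -/
def blackCount {Ω : Type*} (X : ℕ → Ω → Bool) (b n : ℕ) (ω : Ω) : ℕ :=
  b + ((Finset.range n).filter fun i => X i ω = true).card

/-- Number of white balls in the urn after `n` draws. -/
def whiteCount {Ω : Type*} (X : ℕ → Ω → Bool) (w n : ℕ) (ω : Ω) : ℕ :=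
  w + ((Finset.range n).filter fun i => X i ω = false).card

namespace Polya
open Finset

variable {Ω : Type*} [MeasurableSpace Ω] {P : Measure Ω} {X : ℕ → Ω → Bool}

lemma mem_drawsEq_iff {ω : Ω} {ε : List Bool} :
    ω ∈ drawsEq X ε ↔ ∀ i : ℕ, ∀ h : i < ε.length, X i ω = ε[i] := by
  simp only [drawsEq, Set.mem_setOf_eq]
  constructor
  · intro h i hi
    have := List.getElem_ofFn (f := fun i : Fin ε.length => X (i : ℕ) ω) (i := i) (by simpa using hi)
    simp only [h] at this
    simpa using this.symm
  · intro h
    apply List.ext_getElem (by simp)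
    intro i h1 h2
    simpa using h i h2

lemma drawsEq_nil : drawsEq X ([] : List Bool) = Set.univ := by
  ext ω; simp [mem_drawsEq_iff]

lemma drawsEq_concat (ε : List Bool) (v : Bool) :
    drawsEq X (ε ++ [v]) = drawsEq X ε ∩ (X ε.length) ⁻¹' {v} := by
  ext ω
  simp only [mem_drawsEq_iff, Set.mem_inter_iff, Set.mem_preimage, Set.mem_singleton_iff,
    List.length_append, List.length_singleton]
  constructor
  · intro h
    refine ⟨fun i hi => ?_, ?_⟩
    · have := h i (by omega)
      rwa [List.getElem_append_left hi] at this
    · have := h ε.length (by omega)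
      rw [List.getElem_concat_length rfl] at this
      exact this
  · rintro ⟨h1, h2⟩ i hi
    rcases Nat.lt_or_ge i ε.length with hlt | hge
    · rw [List.getElem_append_left hlt]; exact h1 i hlt
    · have : i = ε.length := by omega
      subst this
      rw [List.getElem_concat_length rfl]
      exact h2

lemma measurableSet_drawsEq (hX : ∀ i, Measurable (X i)) (ε : List Bool) :
    MeasurableSet (drawsEq X ε) := by
  have : drawsEq X ε = ⋂ i : Fin ε.length, (X i) ⁻¹' {ε[(i:ℕ)]} := by
    ext ω
    simp only [mem_drawsEq_iff, Set.mem_iInter, Set.mem_preimage, Set.mem_singleton_iff]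
    exact ⟨fun h i => h i i.2, fun h i hi => h ⟨i, hi⟩⟩
  rw [this]
  exact MeasurableSet.iInter fun i => (hX i) (MeasurableSet.singleton _)

/-- probability weight of a history of length `n` with `k` blacks -/
noncomputable def q (b w n k : ℕ) : ℝ :=
  (∏ i ∈ range k, ((b:ℝ) + i)) * (∏ i ∈ range (n - k), ((w:ℝ) + i)) /
    (∏ i ∈ range n, ((b:ℝ) + w + i))

lemma q_nonneg {b w : ℕ} (hb : 1 ≤ b) (hw : 1 ≤ w) (n k : ℕ) : 0 ≤ q b w n k := by
  apply div_nonneg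
  · apply mul_nonneg <;> exact prod_nonneg (fun i _ => by positivity)
  · exact prod_nonneg (fun i _ => by positivity)

lemma denom_pos {b w : ℕ} (hb : 1 ≤ b) (n : ℕ) : 0 < ∏ i ∈ range n, ((b:ℝ) + w + i) := by
  apply prod_pos; intro i _
  have : (1:ℝ) ≤ (b:ℝ) := by exact_mod_cast hb
  positivity

lemma q_succ_true {b w : ℕ} (hb : 1 ≤ b) (hw : 1 ≤ w) {n k : ℕ} (hk : k ≤ n) :
    q b w (n+1) (k+1) = (((b:ℝ) + k) / ((b:ℝ) + w + n)) * q b w n k := by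
  have h1 : n + 1 - (k + 1) = n - k := by omega
  rw [q, q, h1, prod_range_succ, prod_range_succ]
  have h2 := (denom_pos (w := w) hb n).ne'
  have h3 : (b:ℝ) + w + n ≠ 0 := by
    have : (1:ℝ) ≤ (b:ℝ) := by exact_mod_cast hb
    positivity
  field_simp

lemma q_succ_false {b w : ℕ} (hb : 1 ≤ b) (hw : 1 ≤ w) {n k : ℕ} (hk : k ≤ n) :
    q b w (n+1) k = (((w:ℝ) + (n - k : ℕ)) / ((b:ℝ) + w + n)) * q b w n k := by
  have h1 : n + 1 - k = (n - k) + 1 := by omega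
  rw [q, q, h1, prod_range_succ, prod_range_succ]
  have h2 := (denom_pos (w := w) hb n).ne'
  have h3 : (b:ℝ) + w + n ≠ 0 := by
    have : (1:ℝ) ≤ (b:ℝ) := by exact_mod_cast hb
    positivity
  field_simp

lemma q_split {b w : ℕ} (hb : 1 ≤ b) (hw : 1 ≤ w) {n k : ℕ} (hk : k ≤ n) :
    q b w n k = q b w (n+1) (k+1) + q b w (n+1) k := by
  rw [q_succ_true hb hw hk, q_succ_false hb hw hk, ← add_mul]
  have h3 : (b:ℝ) + w + n ≠ 0 := by
    have : (1:ℝ) ≤ (b:ℝ) := by exact_mod_cast hb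
    positivity
  have h4 : ((b:ℝ) + k) / ((b:ℝ) + w + n) + ((w:ℝ) + (n - k : ℕ)) / ((b:ℝ) + w + n) = 1 := by
    rw [← add_div, div_eq_one_iff_eq h3]
    have : ((n - k : ℕ) : ℝ) = (n : ℝ) - k := by
      exact Nat.cast_sub hk
    rw [this]; ring
  rw [h4, one_mul]

lemma ratio_nonneg {b w : ℕ} (hb : 1 ≤ b) {n k : ℕ} : 0 ≤ ((b:ℝ) + k) / ((b:ℝ) + w + n) := by
  have : (1:ℝ) ≤ (b:ℝ) := by exact_mod_cast hb
  positivity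

theorem prob_drawsEq [IsProbabilityMeasure P] {b w : ℕ} (hb : 1 ≤ b) (hw : 1 ≤ w)
    (hX : IsPolyaUrn P X b w) (ε : List Bool) :
    P (drawsEq X ε) = ENNReal.ofReal (q b w ε.length (ε.count true)) := by
  induction ε using List.reverseRecOn with
  | nil => simp [drawsEq_nil, q]
  | append_singleton ε v ih =>
    have hk : ε.count true ≤ ε.length := List.count_le_length
    have hsplit : P (drawsEq X ε) =
        P (drawsEq X (ε ++ [true])) + P (drawsEq X (ε ++ [false])) := by
      rw [drawsEq_concat, drawsEq_concat]
      rw [← measure_union]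
      · congr 1
        ext ω
        simp only [Set.mem_union, Set.mem_inter_iff, Set.mem_preimage, Set.mem_singleton_iff]
        rcases Bool.dichotomy (X ε.length ω) with h | h <;> simp [h]
      · apply Set.disjoint_left.2
        rintro ω ⟨_, h1⟩ ⟨_, h2⟩
        simp only [Set.mem_preimage, Set.mem_singleton_iff] at h1 h2
        rw [h1] at h2; exact Bool.noConfusion h2
      · exact ((measurableSet_drawsEq hX.1 ε).inter ((hX.1 _) (MeasurableSet.singleton _)))
    have htrue : P (drawsEq X (ε ++ [true])) =
        ENNReal.ofReal (q b w (ε.length + 1) (ε.count true + 1)) := by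
      rw [hX.2 ε, ih, ← ENNReal.ofReal_mul (ratio_nonneg hb), ← q_succ_true hb hw hk]
    have hfalse : P (drawsEq X (ε ++ [false])) =
        ENNReal.ofReal (q b w (ε.length + 1) (ε.count true)) := by
      have h1 : P (drawsEq X (ε ++ [false])) = P (drawsEq X ε) - P (drawsEq X (ε ++ [true])) := by
        rw [hsplit]
        rw [ENNReal.add_sub_cancel_left (measure_ne_top P _)]
      rw [h1, ih, htrue, ← ENNReal.ofReal_sub _ (q_nonneg hb hw _ _),
        q_split hb hw hk, add_sub_cancel_left]
    cases v with
    | true =>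
      rw [htrue]
      congr 1 <;> simp [List.count_append]
    | false =>
      rw [hfalse]
      congr 2 <;> simp [List.count_append]

/-- number of blacks among the first `j` draws -/
def T {N : ℕ} (j : ℕ) (f : Fin N → Bool) : ℕ :=
  (Finset.univ.filter fun i : Fin N => (i : ℕ) < j ∧ f i = true).card

/-- total number of blacks -/
def cnt {N : ℕ} (f : Fin N → Bool) : ℕ :=
  (Finset.univ.filter fun i : Fin N => f i = true).card

/-- the difference walk stays positive -/
def Pos (d : ℕ) {N : ℕ} (f : Fin N → Bool) : Prop :=
  ∀ j ≤ N, j + 1 ≤ d + 2 * T j f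

instance {d N : ℕ} : DecidablePred (Pos d (N := N)) := fun f =>
  decidable_of_iff (∀ j : Fin (N + 1), (j : ℕ) + 1 ≤ d + 2 * T j f)
    (by
      constructor
      · intro h j hj
        exact h ⟨j, by omega⟩
      · intro h j
        exact h j (by omega))

/-- number of positive paths of length `N` with `k` blacks -/
def c (d N k : ℕ) : ℕ :=
  (Finset.univ.filter fun f : Fin N → Bool => Pos d f ∧ cnt f = k).card

lemma cnt_le {N : ℕ} (f : Fin N → Bool) : cnt f ≤ N := by
  simpa [cnt] using (Finset.card_filter_le Finset.univ (fun i : Fin N => f i = true)).trans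
    (by simp)

lemma T_snoc {N : ℕ} (f : Fin N → Bool) (v : Bool) {j : ℕ} (hj : j ≤ N) :
    T j (Fin.snoc f v) = T j f := by
  unfold T
  rw [Finset.card_filter, Finset.card_filter, Fin.sum_univ_castSucc]
  rw [if_neg (fun hc => by
    have := hc.1
    rw [Fin.val_last] at this
    omega)]
  simp only [Fin.snoc_castSucc, Fin.coe_castSucc, add_zero]

lemma T_eq_cnt {N : ℕ} (f : Fin N → Bool) : T N f = cnt f := by
  unfold T cnt
  congr 1
  ext i
  simp [i.2]

lemma cnt_snoc {N : ℕ} (f : Fin N → Bool) (v : Bool) :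
    cnt (Fin.snoc f v) = cnt f + (if v = true then 1 else 0) := by
  unfold cnt
  rw [Finset.card_filter, Finset.card_filter, Fin.sum_univ_castSucc]
  simp only [Fin.snoc_castSucc, Fin.snoc_last]

lemma pos_snoc {d N : ℕ} (f : Fin N → Bool) (v : Bool) :
    Pos d (Fin.snoc f v : Fin (N + 1) → Bool) ↔
      Pos d f ∧ N + 2 ≤ d + 2 * cnt (Fin.snoc f v) := by
  constructor
  · intro h
    refine ⟨fun j hj => ?_, ?_⟩
    · have := h j (by omega); rwa [T_snoc f v hj] at this
    · have := h (N + 1) le_rfl; rwa [T_eq_cnt] at this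
  · rintro ⟨h1, h2⟩ j hj
    rcases Nat.lt_or_ge j (N + 1) with hlt | hge
    · rw [T_snoc f v (by omega)]; exact h1 j (by omega)
    · have : j = N + 1 := by omega
      subst this; rwa [T_eq_cnt]

lemma c_eq_zero {d N k : ℕ} (h : d + 2 * k ≤ N) : c d N k = 0 := by
  rw [c, Finset.card_eq_zero, Finset.filter_eq_empty_iff]
  rintro f - ⟨hpos, hcnt⟩
  have := hpos N le_rfl
  rw [T_eq_cnt, hcnt] at this
  omega

lemma card_aux {d N k : ℕ} (h : N + 2 ≤ d + 2 * k) :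
    c d (N + 1) k =
      (Finset.univ.filter fun g : Fin N → Bool => Pos d g ∧ cnt g + 1 = k).card + c d N k := by
  have key : ∀ (v : Bool) (g : Fin N → Bool),
      (Pos d (Fin.snoc g v : Fin (N + 1) → Bool) ∧
        cnt (Fin.snoc g v : Fin (N + 1) → Bool) = k) ↔
        (Pos d g ∧ cnt g + (if v = true then 1 else 0) = k) := by
    intro v g
    rw [pos_snoc, cnt_snoc]
    constructor
    · rintro ⟨⟨h1, _⟩, h3⟩; exact ⟨h1, h3⟩
    · rintro ⟨h1, h3⟩
      refine ⟨⟨h1, ?_⟩, h3⟩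
      cases v <;> simp at h3 ⊢ <;> omega
  rw [c, c, Finset.card_filter, Finset.card_filter, Finset.card_filter]
  rw [← Fintype.sum_equiv (Fin.snocEquiv (fun _ => Bool))
      (fun x => if Pos d (Fin.snoc x.2 x.1 : Fin (N + 1) → Bool) ∧
          cnt (Fin.snoc x.2 x.1 : Fin (N + 1) → Bool) = k then (1 : ℕ) else 0)
      (fun f => if Pos d f ∧ cnt f = k then (1 : ℕ) else 0)
      (fun x => rfl)]
  rw [Fintype.sum_prod_type, Fintype.sum_bool]
  congr 1
  · apply Fintype.sum_congr
    intro g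
    rw [if_congr (key true g) rfl rfl]
    simp
  · apply Fintype.sum_congr
    intro g
    rw [if_congr (key false g) rfl rfl]
    simp

lemma c_succ_zero {d N : ℕ} (h : N + 2 ≤ d) : c d (N + 1) 0 = c d N 0 := by
  rw [card_aux (by omega)]
  convert (zero_add _)
  rw [Finset.card_eq_zero, Finset.filter_eq_empty_iff]
  rintro f - ⟨-, hcnt⟩
  omega

lemma c_succ {d N k : ℕ} (h : N + 2 ≤ d + 2 * (k + 1)) :
    c d (N + 1) (k + 1) = c d N k + c d N (k + 1) := by
  rw [card_aux h]
  congr 2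
  ext g
  simp only [mem_filter, mem_univ, true_and]
  constructor
  · rintro ⟨h1, h2⟩; exact ⟨h1, by omega⟩
  · rintro ⟨h1, h2⟩; exact ⟨h1, by omega⟩

lemma c_formula {d : ℕ} (hd : 1 ≤ d) :
    ∀ N k, N + 1 ≤ d + 2 * k → c d N k + N.choose (k + d) = N.choose k := by
  intro N
  induction N with
  | zero =>
    intro k _
    match k with
    | 0 =>
      have h1 : c d 0 0 = 1 := by
        rw [c]
        have heq : (Finset.univ.filter fun f : Fin 0 → Bool => Pos d f ∧ cnt f = 0) =
            Finset.univ :=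
          Finset.filter_true_of_mem (fun f _ => ⟨fun j hj => by
            have : j = 0 := by omega
            subst this
            omega, by simp [cnt]⟩)
        rw [heq, Finset.card_univ]
        simp
      rw [h1, Nat.choose_eq_zero_of_lt (by omega)]
      simp
    | k + 1 =>
      have h1 : c d 0 (k + 1) = 0 := by
        rw [c, Finset.card_eq_zero, Finset.filter_eq_empty_iff]
        rintro f - ⟨-, hcnt⟩
        have := cnt_le f
        omega
      rw [h1, Nat.choose_eq_zero_of_lt (by omega), Nat.choose_eq_zero_of_lt (by omega)]
  | succ N ih =>
    intro k hk
    match k with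
    | 0 =>
      have hd2 : N + 2 ≤ d := by omega
      rw [c_succ_zero hd2, Nat.choose_eq_zero_of_lt (by omega)]
      have := ih 0 (by omega)
      rw [Nat.choose_eq_zero_of_lt (by omega)] at this
      simpa using this
    | k + 1 =>
      rw [c_succ (by omega)]
      rcases Nat.lt_or_ge N (d + 2 * k) with hlt | hge
      · have i1 := ih k (by omega)
        have i2 := ih (k + 1) (by omega)
        have p1 : (N + 1).choose (k + 1 + d) = N.choose (k + d) + N.choose (k + 1 + d) := by
          have he : k + 1 + d = (k + d) + 1 := by omega
          rw [he, Nat.choose_succ_succ]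
        have p2 : (N + 1).choose (k + 1) = N.choose k + N.choose (k + 1) :=
          Nat.choose_succ_succ _ _
        omega
      · have hN : N = d + 2 * k := by omega
        have hz : c d N k = 0 := c_eq_zero (by omega)
        have i2 := ih (k + 1) (by omega)
        have p1 : (N + 1).choose (k + 1 + d) = N.choose (k + d) + N.choose (k + 1 + d) := by
          have he : k + 1 + d = (k + d) + 1 := by omega
          rw [he, Nat.choose_succ_succ]
        have p2 : (N + 1).choose (k + 1) = N.choose k + N.choose (k + 1) :=
          Nat.choose_succ_succ _ _
        have hsymm : N.choose (k + d) = N.choose k := by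
          have h1 : k ≤ N := by omega
          have he : N - k = k + d := by omega
          rw [← he, Nat.choose_symm h1]
        omega

/- ## Bridge between events and cylinders -/

variable {b w d N : ℕ}


lemma count_ofFn : ∀ {N : ℕ} (f : Fin N → Bool), (List.ofFn f).count true = cnt f := by
  intro N
  induction N with
  | zero => intro f; simp [cnt]
  | succ N ih =>
    intro f
    rw [List.ofFn_succ', List.concat_eq_append, List.count_append]
    have hs : f = Fin.snoc (Fin.init f) (f (Fin.last N)) := (Fin.snoc_init_self f).symm
    conv_rhs => rw [hs]
    rw [cnt_snoc, ih (fun i => f i.castSucc)]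
    have : cnt (Fin.init f) = cnt (fun i => f i.castSucc) := rfl
    rw [this]
    cases f (Fin.last N) <;> simp

lemma drawsEq_ofFn (f : Fin N → Bool) :
    drawsEq X (List.ofFn f) = {ω | (fun i : Fin N => X (i : ℕ) ω) = f} := by
  ext ω
  simp only [Set.mem_setOf_eq, mem_drawsEq_iff, List.length_ofFn]
  constructor
  · intro h
    funext i
    have := h i (by simpa using i.2)
    rw [List.getElem_ofFn] at this
    simpa using this
  · intro h i hi
    rw [List.getElem_ofFn]
    have := congrFun h ⟨i, by simpa using hi⟩
    simpa using this

lemma T_eq_range (ω : Ω) {n : ℕ} (hn : n ≤ N) :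
    T n (fun i : Fin N => X (i : ℕ) ω) =
      ((Finset.range n).filter fun i => X i ω = true).card := by
  unfold T
  rw [Finset.card_filter, Finset.card_filter]
  rw [Fin.sum_univ_eq_sum_range (fun j => if j < n ∧ X j ω = true then (1 : ℕ) else 0)]
  rw [← Finset.sum_subset (Finset.range_subset_range.2 hn) (fun x _ hx => by
    rw [if_neg]
    rw [Finset.mem_range] at hx
    intro hc
    exact hx hc.1)]
  apply Finset.sum_congr rfl
  intro j hj
  rw [Finset.mem_range] at hj
  simp [hj]

lemma filter_true_add_false (n : ℕ) (ω : Ω) :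
    ((Finset.range n).filter fun i => X i ω = true).card +
      ((Finset.range n).filter fun i => X i ω = false).card = n := by
  have : ((Finset.range n).filter fun i => X i ω = false) =
      ((Finset.range n).filter fun i => ¬(X i ω = true)) := by
    apply Finset.filter_congr
    intro i _
    simp
  rw [this, Finset.card_filter_add_card_filter_not, Finset.card_range]

lemma t_step (ω : Ω) (n : ℕ) :
    ((Finset.range (n+1)).filter fun i => X i ω = true).card =
      ((Finset.range n).filter fun i => X i ω = true).card ∨
    ((Finset.range (n+1)).filter fun i => X i ω = true).card =
      ((Finset.range n).filter fun i => X i ω = true).card + 1 := by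
  by_cases h : X n ω = true
  · right
    rw [Finset.range_add_one, Finset.filter_insert, if_pos h,
      Finset.card_insert_of_notMem (by simp)]
  · left
    rw [Finset.range_add_one, Finset.filter_insert, if_neg h]

lemma never_eq_iff_pos (hb : b = w + d) (hd : 1 ≤ d) (ω : Ω) :
    (∀ n ≤ N, blackCount X b n ω ≠ whiteCount X w n ω) ↔
      Pos d (fun i : Fin N => X (i : ℕ) ω) := by
  have hiff : ∀ n : ℕ, (blackCount X b n ω = whiteCount X w n ω) ↔
      d + 2 * ((Finset.range n).filter fun i => X i ω = true).card = n := by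
    intro n
    have hadd := filter_true_add_false (X := X) n ω
    unfold blackCount whiteCount
    omega
  constructor
  · intro h
    have key : ∀ n, n ≤ N →
        n + 1 ≤ d + 2 * ((Finset.range n).filter fun i => X i ω = true).card := by
      intro n
      induction n with
      | zero =>
        intro _
        have h0 : ((Finset.range 0).filter fun i => X i ω = true).card = 0 := by simp
        omega
      | succ m ihm =>
        intro hn
        have h1 := ihm (by omega)
        have h2 : ¬(d + 2 * ((Finset.range (m+1)).filter fun i => X i ω = true).card = m + 1) :=
          fun hc => h (m+1) hn ((hiff (m+1)).2 hc)
        rcases t_step (X := X) ω m with h3 | h3 <;> omega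
    intro j hj
    rw [T_eq_range ω hj]
    exact key j hj
  · intro h n hn
    rw [Ne, hiff n]
    have h1 := h n hn
    rw [T_eq_range ω hn] at h1
    omega

lemma notA_eq (hb : b = w + d) (hd : 1 ≤ d) :
    {ω : Ω | ∀ n ≤ N, blackCount X b n ω ≠ whiteCount X w n ω} =
      ⋃ f ∈ Finset.univ.filter (Pos d (N := N)), drawsEq X (List.ofFn f) := by
  ext ω
  simp only [Set.mem_setOf_eq, Set.mem_iUnion, Finset.mem_filter, Finset.mem_univ, true_and,
    drawsEq_ofFn, Set.mem_setOf_eq, exists_prop]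
  rw [never_eq_iff_pos hb hd ω]
  constructor
  · intro h
    exact ⟨fun i => X (i : ℕ) ω, h, rfl⟩
  · rintro ⟨f, hf, rfl⟩
    exact hf

lemma measure_notA [IsProbabilityMeasure P] (hX : IsPolyaUrn P X b w)
    (hb : b = w + d) (hd : 1 ≤ d) (hw : 1 ≤ w) :
    P {ω : Ω | ∀ n ≤ N, blackCount X b n ω ≠ whiteCount X w n ω} =
      ENNReal.ofReal (∑ k ∈ Finset.range (N + 1), (c d N k : ℝ) * q b w N k) := by
  have hb1 : 1 ≤ b := by omega
  rw [notA_eq hb hd]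
  rw [measure_biUnion_finset ?disj ?meas]
  case disj =>
    intro f hf g hg hfg
    simp only [Function.onFun]
    rw [drawsEq_ofFn, drawsEq_ofFn]
    apply Set.disjoint_left.2
    intro ω h1 h2
    simp only [Set.mem_setOf_eq] at h1 h2
    exact hfg (h1.symm.trans h2)
  case meas =>
    intro f _
    exact measurableSet_drawsEq hX.1 _
  have hterm : ∀ f : Fin N → Bool,
      P (drawsEq X (List.ofFn f)) = ENNReal.ofReal (q b w N (cnt f)) := by
    intro f
    rw [prob_drawsEq hb1 hw hX, List.length_ofFn, count_ofFn]
  calc ∑ f ∈ Finset.univ.filter (Pos d (N := N)), P (drawsEq X (List.ofFn f))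
      = ∑ f ∈ Finset.univ.filter (Pos d (N := N)), ENNReal.ofReal (q b w N (cnt f)) :=
        Finset.sum_congr rfl fun f _ => hterm f
    _ = ENNReal.ofReal (∑ f ∈ Finset.univ.filter (Pos d (N := N)), q b w N (cnt f)) := by
        rw [ENNReal.ofReal_sum_of_nonneg fun f _ => q_nonneg hb1 hw _ _]
    _ = ENNReal.ofReal (∑ k ∈ Finset.range (N + 1), (c d N k : ℝ) * q b w N k) := by
        congr 1
        rw [← Finset.sum_fiberwise_of_maps_to (g := cnt)
          (fun f hf => Finset.mem_range.2 (Nat.lt_succ_of_le (cnt_le f)))]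
        apply Finset.sum_congr rfl
        intro k _
        have hconst : ∀ f ∈ (Finset.univ.filter (Pos d (N := N))).filter (fun f => cnt f = k),
            q b w N (cnt f) = q b w N k := by
          intro f hf
          rw [Finset.mem_filter] at hf
          rw [hf.2]
        rw [Finset.sum_congr rfl hconst, Finset.sum_const, nsmul_eq_mul]
        congr 2
        rw [c, Finset.filter_filter]

/- ## Integrals -/
open intervalIntegral Topology

noncomputable def Jr (m n : ℕ) : ℝ := ∫ x in (0:ℝ)..1, x ^ m * (1 - x) ^ n

lemma Jr_zero (m : ℕ) : Jr m 0 = 1 / (m + 1) := by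
  simp [Jr, integral_pow]

lemma cont_mn (m n : ℕ) : Continuous (fun x : ℝ => x ^ m * (1 - x) ^ n) := by
  continuity

lemma Jr_step (m n : ℕ) :
    ((m:ℝ) + 1) * Jr m (n + 1) = ((n:ℝ) + 1) * Jr (m + 1) n := by
  have key : ∀ x : ℝ, HasDerivAt (fun y : ℝ => y ^ (m+1) * (1 - y) ^ (n+1))
      (((m:ℝ)+1) * x ^ m * (1-x)^(n+1) - ((n:ℝ)+1) * x^(m+1) * (1-x)^n) x := by
    intro x
    have h1 : HasDerivAt (fun y : ℝ => y ^ (m+1)) (((m:ℝ)+1) * x ^ m) x := by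
      simpa using hasDerivAt_pow (m+1) x
    have h2 : HasDerivAt (fun y : ℝ => (1 - y) ^ (n+1))
        (((n:ℝ)+1) * (1-x)^n * (-1)) x := by
      have hb : HasDerivAt (fun y : ℝ => 1 - y) (-1) x := by
        simpa using (hasDerivAt_id x).const_sub 1
      simpa using hb.fun_pow (n+1)
    have := h1.fun_mul h2
    refine this.congr_deriv ?_
    ring
  have hint : ∫ x in (0:ℝ)..1, (((m:ℝ)+1) * x ^ m * (1-x)^(n+1) - ((n:ℝ)+1) * x^(m+1) * (1-x)^n)
      = 0 := by
    rw [integral_eq_sub_of_hasDerivAt (fun x _ => key x) (by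
      apply Continuous.intervalIntegrable
      continuity)]
    norm_num
  rw [intervalIntegral.integral_sub (by apply Continuous.intervalIntegrable; continuity)
    (by apply Continuous.intervalIntegrable; continuity)] at hint
  simp_rw [mul_assoc] at hint
  rw [intervalIntegral.integral_const_mul, intervalIntegral.integral_const_mul] at hint
  unfold Jr
  linarith [hint]

lemma Jr_closed : ∀ n m : ℕ, Jr m n = (Nat.factorial m * Nat.factorial n : ℝ) /
    Nat.factorial (m + n + 1) := by
  intro n
  induction n with
  | zero =>
    intro m
    rw [Jr_zero]
    rw [Nat.factorial_succ]
    push_cast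
    rw [Nat.factorial_zero]
    have : (Nat.factorial m : ℝ) ≠ 0 := by exact_mod_cast Nat.factorial_ne_zero m
    field_simp
    norm_num
  | succ n ih =>
    intro m
    have hstep := Jr_step m n
    have h2 := ih (m + 1)
    have hm : (0:ℝ) < (m:ℝ) + 1 := by positivity
    have heq : Jr m (n+1) = ((n:ℝ)+1) / ((m:ℝ)+1) * Jr (m+1) n := by
      field_simp
      linarith [hstep]
    rw [heq, h2]
    have harr : m + 1 + n + 1 = m + (n+1) + 1 := by omega
    rw [harr]
    have hf1 : (Nat.factorial (m+1) : ℝ) = ((m:ℝ)+1) * Nat.factorial m := by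
      rw [Nat.factorial_succ]; push_cast; ring
    have hf2 : (Nat.factorial (n+1) : ℝ) = ((n:ℝ)+1) * Nat.factorial n := by
      rw [Nat.factorial_succ]; push_cast; ring
    rw [hf1, hf2]
    have h3 : (Nat.factorial (m + (n+1) + 1) : ℝ) ≠ 0 := by
      exact_mod_cast Nat.factorial_ne_zero _
    field_simp

lemma Jr_pos (m n : ℕ) : 0 < Jr m n := by
  rw [Jr_closed]
  have h1 : (0:ℝ) < Nat.factorial m := by exact_mod_cast Nat.factorial_pos m
  have h2 : (0:ℝ) < Nat.factorial n := by exact_mod_cast Nat.factorial_pos n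
  have h3 : (0:ℝ) < Nat.factorial (m+n+1) := by exact_mod_cast Nat.factorial_pos _
  positivity

lemma Jr_symm (m n : ℕ) : Jr m n = Jr n m := by
  rw [Jr_closed, Jr_closed]
  rw [show n + m + 1 = m + n + 1 by omega]
  ring

/- ## Binomial sums -/

noncomputable def bin (N k : ℕ) (p : ℝ) : ℝ := (N.choose k : ℝ) * p ^ k * (1 - p) ^ (N - k)

lemma bin_nonneg {N k : ℕ} {p : ℝ} (h0 : 0 ≤ p) (h1 : p ≤ 1) : 0 ≤ bin N k p := by
  unfold bin
  have : (0:ℝ) ≤ 1 - p := by linarith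
  positivity

lemma sum_bin (N : ℕ) (p : ℝ) : ∑ k ∈ range (N + 1), bin N k p = 1 := by
  have := add_pow p (1 - p) N
  simp only [add_sub_cancel, one_pow] at this
  rw [eq_comm] at this
  rw [← this]
  apply Finset.sum_congr rfl
  intro k _
  unfold bin
  ring

lemma sum_sq_bin (N : ℕ) (p : ℝ) :
    ∑ k ∈ range (N + 1), ((N:ℝ) * p - k) ^ 2 * bin N k p = N * p * (1 - p) := by
  have hv := bernsteinPolynomial.variance ℝ N
  have := congrArg (Polynomial.eval p) hv
  simp only [Polynomial.eval_finset_sum, Polynomial.eval_mul, Polynomial.eval_pow,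
    Polynomial.eval_sub, Polynomial.eval_natCast, Polynomial.eval_X, Polynomial.eval_one,
    nsmul_eq_mul, smul_eq_mul] at this
  rw [← this]
  apply Finset.sum_congr rfl
  intro k _
  have hb : Polynomial.eval p (bernsteinPolynomial ℝ N k) = bin N k p := by
    unfold bernsteinPolynomial bin
    simp [Polynomial.eval_mul, Polynomial.eval_pow, mul_assoc]
  rw [hb]

lemma cheb {N : ℕ} {p δ : ℝ} (h0 : 0 ≤ p) (h1 : p ≤ 1) (hδ : 0 < δ) (hN : 1 ≤ N)
    (s : Finset ℕ) (hs : s ⊆ range (N + 1))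
    (h : ∀ k ∈ s, δ * N ≤ |(k : ℝ) - N * p|) :
    ∑ k ∈ s, bin N k p ≤ 1 / (δ ^ 2 * N) := by
  have hNpos : (0:ℝ) < N := by exact_mod_cast hN
  have step1 : ∑ k ∈ s, bin N k p ≤
      ∑ k ∈ s, (((N:ℝ) * p - k) / (δ * N)) ^ 2 * bin N k p := by
    apply Finset.sum_le_sum
    intro k hk
    have hb := bin_nonneg (N := N) (k := k) h0 h1
    have habs : δ * N ≤ |(N:ℝ) * p - k| := by
      have := h k hk
      rwa [abs_sub_comm] at this
    have h2 : (1:ℝ) ≤ (((N:ℝ) * p - k) / (δ * N)) ^ 2 := by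
      rw [div_pow, le_div_iff₀ (by positivity), one_mul]
      have : (δ * N) ^ 2 ≤ |(N:ℝ) * p - k| ^ 2 := by
        apply pow_le_pow_left₀ (by positivity) habs
      calc (δ * N) ^ 2 ≤ |(N:ℝ) * p - k| ^ 2 := this
        _ = ((N:ℝ) * p - k) ^ 2 := sq_abs _
    nlinarith [hb, h2]
  have step2 : ∑ k ∈ s, (((N:ℝ) * p - k) / (δ * N)) ^ 2 * bin N k p ≤
      ∑ k ∈ range (N + 1), (((N:ℝ) * p - k) / (δ * N)) ^ 2 * bin N k p := by
    apply Finset.sum_le_sum_of_subset_of_nonneg hs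
    intro k _ _
    have hb := bin_nonneg (N := N) (k := k) h0 h1
    positivity
  have step3 : ∑ k ∈ range (N + 1), (((N:ℝ) * p - k) / (δ * N)) ^ 2 * bin N k p =
      (N * p * (1 - p)) / (δ * N) ^ 2 := by
    rw [eq_div_iff (by positivity), Finset.sum_mul]
    rw [← sum_sq_bin N p]
    apply Finset.sum_congr rfl
    intro k _
    rw [div_pow]
    field_simp
  have step4 : (N * p * (1 - p)) / (δ * N) ^ 2 ≤ 1 / (δ ^ 2 * N) := by
    rw [div_le_div_iff₀ (by positivity) (by positivity)]
    have hp1 : p * (1 - p) ≤ 1 := by nlinarith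
    have : (N:ℝ) * p * (1 - p) * (δ ^ 2 * N) = (p * (1-p)) * (δ^2 * N^2) := by ring
    rw [this]
    have : (1:ℝ) * (δ * N) ^ 2 = δ^2 * N^2 := by ring
    rw [this]
    nlinarith [sq_nonneg δ, sq_nonneg (N:ℝ), hNpos]
  linarith

/- ## The truncated binomial sum and its limit -/

noncomputable def S (a e N : ℕ) (p : ℝ) : ℝ :=
  ∑ k ∈ (range (N + 1)).filter (fun k => 2 * k + a ≤ N + e), bin N k p

lemma S_nonneg {a e N : ℕ} {p : ℝ} (h0 : 0 ≤ p) (h1 : p ≤ 1) : 0 ≤ S a e N p :=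
  Finset.sum_nonneg fun k _ => bin_nonneg h0 h1

lemma S_le_one {a e N : ℕ} {p : ℝ} (h0 : 0 ≤ p) (h1 : p ≤ 1) : S a e N p ≤ 1 := by
  rw [← sum_bin N p]
  exact Finset.sum_le_sum_of_subset_of_nonneg (Finset.filter_subset _ _)
    (fun k _ _ => bin_nonneg h0 h1)

lemma S_compl {a e N : ℕ} (p : ℝ) :
    S a e N p + ∑ k ∈ (range (N + 1)).filter (fun k => ¬(2 * k + a ≤ N + e)), bin N k p = 1 := by
  rw [S, Finset.sum_filter_add_sum_filter_not, sum_bin]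

lemma inv_lin_tendsto (cδ : ℝ) :
    Filter.Tendsto (fun N : ℕ => 1 / (cδ * N)) Filter.atTop (𝓝 0) := by
  have : (fun N : ℕ => 1 / (cδ * N)) = fun N : ℕ => (1 / cδ) * (1 / (N : ℝ)) := by
    funext N
    rw [one_div, one_div, one_div, mul_inv]
  rw [this]
  have h := tendsto_one_div_atTop_nhds_zero_nat (𝕜 := ℝ)
  simpa using h.const_mul (1 / cδ)

lemma tendsto_S (a e : ℕ) {p : ℝ} (h0 : 0 < p) (h1 : p < 1) (hne : p ≠ 1 / 2) :
    Filter.Tendsto (fun N => S a e N p) Filter.atTop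
      (𝓝 (if p < 1 / 2 then 1 else 0)) := by
  have h0' : (0:ℝ) ≤ p := le_of_lt h0
  have h1' : p ≤ 1 := le_of_lt h1
  rcases lt_or_gt_of_ne hne with hlt | hgt
  · rw [if_pos hlt]
    set δ : ℝ := (1 / 2 - p) / 2 with hδdef
    have hδ : 0 < δ := by rw [hδdef]; linarith
    have hbound : ∀ᶠ N : ℕ in Filter.atTop, 1 - 1 / (δ ^ 2 * N) ≤ S a e N p := by
      filter_upwards [Filter.eventually_ge_atTop (max 1 ⌈(a : ℝ) / (2 * δ)⌉₊)] with N hN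
      have hN1 : 1 ≤ N := le_trans (le_max_left _ _) hN
      have hN2 : (a : ℝ) / (2 * δ) ≤ N := by
        calc (a : ℝ) / (2 * δ) ≤ ⌈(a : ℝ) / (2 * δ)⌉₊ := Nat.le_ceil _
          _ ≤ N := by exact_mod_cast le_trans (le_max_right _ _) hN
      have ha2 : (a : ℝ) ≤ 2 * δ * N := by
        rw [div_le_iff₀ (by positivity)] at hN2
        linarith [hN2]
      have hch := cheb h0' h1' hδ hN1
        ((range (N + 1)).filter (fun k => ¬(2 * k + a ≤ N + e)))
        (Finset.filter_subset _ _) ?_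
      · have := S_compl (a := a) (e := e) (N := N) p
        linarith
      · intro k hk
        rw [Finset.mem_filter, Finset.mem_range] at hk
        have hk2 : N + e + 1 ≤ 2 * k + a := by omega
        have hkr : (N : ℝ) - a ≤ 2 * k := by
          have : (N : ℝ) + e + 1 ≤ 2 * k + a := by exact_mod_cast hk2
          linarith
        have hkey : δ * N ≤ (k : ℝ) - N * p := by
          have : (N : ℝ) * (1 - 2 * p) = 4 * δ * N := by rw [hδdef]; ring
          nlinarith [hkr, ha2]
        exact le_trans hkey (le_abs_self _)
    have hub : ∀ᶠ N : ℕ in Filter.atTop, S a e N p ≤ 1 :=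
      Filter.Eventually.of_forall fun N => S_le_one h0' h1'
    refine tendsto_of_tendsto_of_tendsto_of_le_of_le' ?_ tendsto_const_nhds hbound hub
    have := (inv_lin_tendsto (δ ^ 2)).const_sub 1
    simpa using this
  · rw [if_neg (by linarith)]
    set δ : ℝ := (p - 1 / 2) / 2 with hδdef
    have hδ : 0 < δ := by rw [hδdef]; linarith
    have hbound : ∀ᶠ N : ℕ in Filter.atTop, S a e N p ≤ 1 / (δ ^ 2 * N) := by
      filter_upwards [Filter.eventually_ge_atTop (max 1 ⌈(e : ℝ) / (2 * δ)⌉₊)] with N hN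
      have hN1 : 1 ≤ N := le_trans (le_max_left _ _) hN
      have hN2 : (e : ℝ) / (2 * δ) ≤ N := by
        calc (e : ℝ) / (2 * δ) ≤ ⌈(e : ℝ) / (2 * δ)⌉₊ := Nat.le_ceil _
          _ ≤ N := by exact_mod_cast le_trans (le_max_right _ _) hN
      have he2 : (e : ℝ) ≤ 2 * δ * N := by
        rw [div_le_iff₀ (by positivity)] at hN2
        linarith [hN2]
      have hch := cheb h0' h1' hδ hN1
        ((range (N + 1)).filter (fun k => 2 * k + a ≤ N + e))
        (Finset.filter_subset _ _) ?_
      · exact le_trans (le_of_eq rfl) hch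
      · intro k hk
        rw [Finset.mem_filter, Finset.mem_range] at hk
        have hk2 : 2 * k ≤ N + e := by omega
        have hkr : 2 * (k : ℝ) ≤ (N : ℝ) + e := by exact_mod_cast hk2
        have hkey : δ * N ≤ (N : ℝ) * p - k := by
          have : (N : ℝ) * (2 * p - 1) = 4 * δ * N := by rw [hδdef]; ring
          nlinarith [hkr, he2]
        rw [abs_sub_comm]
        exact le_trans hkey (le_abs_self _)
    have hlb : ∀ᶠ N : ℕ in Filter.atTop, 0 ≤ S a e N p :=
      Filter.Eventually.of_forall fun N => S_nonneg h0' h1'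
    refine tendsto_of_tendsto_of_tendsto_of_le_of_le' tendsto_const_nhds ?_ hlb hbound
    exact inv_lin_tendsto (δ ^ 2)

/- ## Integral representation of the urn probabilities -/

lemma prod_asc {b : ℕ} (hb : 1 ≤ b) (k : ℕ) :
    ∏ i ∈ Finset.range k, ((b:ℝ) + i) =
      (Nat.factorial (b - 1 + k) : ℝ) / (Nat.factorial (b - 1)) := by
  induction k with
  | zero =>
    simp only [Finset.range_zero, Finset.prod_empty, Nat.add_zero]
    rw [div_self (by exact_mod_cast Nat.factorial_ne_zero _)]
  | succ k ih =>
    rw [Finset.prod_range_succ, ih]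
    have hc : ((b - 1 + (k + 1) : ℕ) : ℝ) = ((b - 1 + k : ℕ) : ℝ) + 1 := by push_cast; ring
    have hfact : (Nat.factorial (b - 1 + (k + 1)) : ℝ) =
        (((b - 1 + k : ℕ) : ℝ) + 1) * Nat.factorial (b - 1 + k) := by
      have : b - 1 + (k + 1) = (b - 1 + k) + 1 := by omega
      rw [this, Nat.factorial_succ]
      push_cast
      ring
    have hbk : (b : ℝ) + k = ((b - 1 + k : ℕ) : ℝ) + 1 := by
      push_cast [Nat.cast_sub hb]
      ring
    rw [hfact, hbk]
    have hne : (Nat.factorial (b - 1) : ℝ) ≠ 0 := by exact_mod_cast Nat.factorial_ne_zero _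
    field_simp

lemma q_eq_Jr {b w : ℕ} (hb : 1 ≤ b) (hw : 1 ≤ w) {N k : ℕ} (hk : k ≤ N) :
    q b w N k = Jr (b - 1 + k) (w - 1 + (N - k)) / Jr (b - 1) (w - 1) := by
  have hbw : 1 ≤ b + w := by omega
  have hd : ∀ i : ℕ, (b:ℝ) + w + i = ((b + w : ℕ) : ℝ) + i := by intro i; push_cast; ring
  rw [q]
  rw [Finset.prod_congr rfl (fun i _ => hd i)]
  rw [prod_asc hb, prod_asc hw, prod_asc hbw]
  rw [Jr_closed, Jr_closed]
  have e1 : b - 1 + k + (w - 1 + (N - k)) + 1 = b + w - 1 + N := by omega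
  have e2 : b - 1 + (w - 1) + 1 = b + w - 1 := by omega
  rw [e1, e2]
  have n1 : (Nat.factorial (b - 1) : ℝ) ≠ 0 := by exact_mod_cast Nat.factorial_ne_zero _
  have n2 : (Nat.factorial (w - 1) : ℝ) ≠ 0 := by exact_mod_cast Nat.factorial_ne_zero _
  have n3 : (Nat.factorial (b + w - 1) : ℝ) ≠ 0 := by exact_mod_cast Nat.factorial_ne_zero _
  have n4 : (Nat.factorial (b + w - 1 + N) : ℝ) ≠ 0 := by exact_mod_cast Nat.factorial_ne_zero _
  have n5 : (Nat.factorial (b - 1 + k) : ℝ) ≠ 0 := by exact_mod_cast Nat.factorial_ne_zero _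
  have n6 : (Nat.factorial (w - 1 + (N - k)) : ℝ) ≠ 0 := by exact_mod_cast Nat.factorial_ne_zero _
  field_simp

lemma choose_q_integral {b w : ℕ} (hb : 1 ≤ b) (hw : 1 ≤ w) {N k : ℕ} (hk : k ≤ N) :
    (N.choose k : ℝ) * q b w N k =
      (∫ x in (0:ℝ)..1, bin N k x * (x ^ (b - 1) * (1 - x) ^ (w - 1))) /
        Jr (b - 1) (w - 1) := by
  rw [q_eq_Jr hb hw hk]
  have key : (∫ x in (0:ℝ)..1, bin N k x * (x ^ (b - 1) * (1 - x) ^ (w - 1)))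
      = (N.choose k : ℝ) * Jr (b - 1 + k) (w - 1 + (N - k)) := by
    rw [Jr, ← intervalIntegral.integral_const_mul]
    apply intervalIntegral.integral_congr
    intro x _
    simp only [bin, pow_add]
    ring
  rw [key, mul_div_assoc]

lemma sum_choose_q {b w : ℕ} (hb : 1 ≤ b) (hw : 1 ≤ w) (N : ℕ) (t : Finset ℕ)
    (ht : t ⊆ Finset.range (N + 1)) :
    ∑ k ∈ t, (N.choose k : ℝ) * q b w N k =
      (∫ x in (0:ℝ)..1, (∑ k ∈ t, bin N k x) * (x ^ (b - 1) * (1 - x) ^ (w - 1))) /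
        Jr (b - 1) (w - 1) := by
  rw [Finset.sum_congr rfl (fun k hk => choose_q_integral hb hw
    (by have := Finset.mem_range.1 (ht hk); omega))]
  rw [← Finset.sum_div]
  congr 1
  rw [← intervalIntegral.integral_finset_sum]
  · apply intervalIntegral.integral_congr
    intro x _
    simp only [Finset.sum_mul]
  · intro k _
    apply Continuous.intervalIntegrable
    have : Continuous (fun x : ℝ => bin N k x) := by unfold bin; continuity
    continuity

lemma sum_choose_q_total {b w : ℕ} (hb : 1 ≤ b) (hw : 1 ≤ w) (N : ℕ) :
    ∑ k ∈ Finset.range (N + 1), (N.choose k : ℝ) * q b w N k = 1 := by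
  rw [sum_choose_q hb hw N _ subset_rfl]
  have : (∫ x in (0:ℝ)..1, (∑ k ∈ Finset.range (N + 1), bin N k x) *
      (x ^ (b - 1) * (1 - x) ^ (w - 1))) = Jr (b - 1) (w - 1) := by
    rw [Jr]
    apply intervalIntegral.integral_congr
    intro x _
    simp only [sum_bin, one_mul]
  rw [this, div_self (Jr_pos _ _).ne']

/- ## The limit of the truncated beta-binomial sums -/

lemma S_continuous (a e N : ℕ) : Continuous (fun x : ℝ => S a e N x) := by
  apply continuous_finset_sum
  intro k _
  unfold bin
  continuity

lemma rho_integrableOn (b w : ℕ) :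
    MeasureTheory.IntegrableOn (fun x : ℝ => x ^ (b - 1) * (1 - x) ^ (w - 1))
      (Set.Ioo (0:ℝ) 1) := by
  apply MeasureTheory.IntegrableOn.mono_set
    ((cont_mn (b - 1) (w - 1)).integrableOn_Icc (a := 0) (b := 1))
  exact Set.Ioo_subset_Icc_self

lemma tendsto_L (b w a e : ℕ) (hb : 1 ≤ b) (hw : 1 ≤ w) :
    Filter.Tendsto (fun N => ∑ k ∈ (Finset.range (N + 1)).filter
        (fun k => 2 * k + a ≤ N + e), (N.choose k : ℝ) * q b w N k) Filter.atTop
      (𝓝 ((∫ x in Set.Ioo (0:ℝ) (1/2), x ^ (b - 1) * (1 - x) ^ (w - 1)) /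
        Jr (b - 1) (w - 1))) := by
  have hrw : ∀ N : ℕ, ∑ k ∈ (Finset.range (N + 1)).filter (fun k => 2 * k + a ≤ N + e),
      (N.choose k : ℝ) * q b w N k =
      (∫ x in Set.Ioo (0:ℝ) 1, S a e N x * (x ^ (b - 1) * (1 - x) ^ (w - 1))) /
        Jr (b - 1) (w - 1) := by
    intro N
    rw [sum_choose_q hb hw N _ (Finset.filter_subset _ _)]
    congr 1
    rw [intervalIntegral.integral_of_le (by norm_num), MeasureTheory.integral_Ioc_eq_integral_Ioo]
    rfl
  have hind : (∫ x in Set.Ioo (0:ℝ) 1,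
      (if x < 1/2 then (1:ℝ) else 0) * (x ^ (b - 1) * (1 - x) ^ (w - 1))) =
      ∫ x in Set.Ioo (0:ℝ) (1/2), x ^ (b - 1) * (1 - x) ^ (w - 1) := by
    have heq : (fun x : ℝ => (if x < 1/2 then (1:ℝ) else 0) *
        (x ^ (b - 1) * (1 - x) ^ (w - 1))) =
        Set.indicator (Set.Iio (1/2)) (fun x : ℝ => x ^ (b - 1) * (1 - x) ^ (w - 1)) := by
      funext x
      rw [Set.indicator_apply]
      by_cases h : x < 1/2 <;> simp [h, Set.mem_Iio]
    rw [heq, MeasureTheory.integral_indicator measurableSet_Iio,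
      MeasureTheory.Measure.restrict_restrict measurableSet_Iio]
    have hset : Set.Iio (1/2 : ℝ) ∩ Set.Ioo (0:ℝ) 1 = Set.Ioo (0:ℝ) (1/2) := by
      ext x
      simp only [Set.mem_inter_iff, Set.mem_Iio, Set.mem_Ioo]
      constructor
      · rintro ⟨h1, h2, h3⟩; exact ⟨h2, h1⟩
      · rintro ⟨h1, h2⟩; exact ⟨h2, h1, by linarith⟩
    rw [hset]
  simp only [hrw]
  apply Filter.Tendsto.div_const
  rw [← hind]
  apply MeasureTheory.tendsto_integral_of_dominated_convergence
    (fun x : ℝ => x ^ (b - 1) * (1 - x) ^ (w - 1))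
  · intro N
    exact (((S_continuous a e N).mul (cont_mn _ _))).aestronglyMeasurable
  · exact rho_integrableOn b w
  · intro N
    filter_upwards [MeasureTheory.ae_restrict_mem measurableSet_Ioo] with x hx
    have h0 : (0:ℝ) ≤ x := le_of_lt hx.1
    have h1 : x ≤ 1 := le_of_lt hx.2
    have hρ : 0 ≤ x ^ (b - 1) * (1 - x) ^ (w - 1) := by
      have : (0:ℝ) ≤ 1 - x := by linarith
      positivity
    rw [Real.norm_eq_abs, abs_of_nonneg (mul_nonneg (S_nonneg h0 h1) hρ)]
    calc S a e N x * (x ^ (b - 1) * (1 - x) ^ (w - 1)) ≤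
        1 * (x ^ (b - 1) * (1 - x) ^ (w - 1)) := by
          apply mul_le_mul_of_nonneg_right (S_le_one h0 h1) hρ
      _ = _ := one_mul _
  · have hhalf : ∀ᵐ x : ℝ ∂(MeasureTheory.volume.restrict (Set.Ioo (0:ℝ) 1)),
        x ≠ 1/2 := by
      rw [MeasureTheory.ae_iff]
      have hset : {x : ℝ | ¬ x ≠ 1/2} = {(1/2 : ℝ)} := by ext x; simp
      rw [hset]
      refine le_antisymm (le_trans (MeasureTheory.Measure.restrict_apply_le _ _) ?_) zero_le
      simp
    filter_upwards [MeasureTheory.ae_restrict_mem measurableSet_Ioo, hhalf] with x hx hne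
    exact (tendsto_S a e hx.1 hx.2 hne).mul_const _

/- ## Reflection identity for the half integral -/

lemma half_integral_reflect (b w : ℕ) :
    (∫ x in Set.Ioo (0:ℝ) (1/2), x ^ (w - 1) * (1 - x) ^ (b - 1)) =
      Jr (b - 1) (w - 1) - ∫ x in Set.Ioo (0:ℝ) (1/2), x ^ (b - 1) * (1 - x) ^ (w - 1) := by
  have hIoo : ∀ (c : ℝ) (hc : (0:ℝ) ≤ c) (m n : ℕ),
      (∫ x in Set.Ioo (0:ℝ) c, x ^ m * (1 - x) ^ n) = ∫ x in (0:ℝ)..c, x ^ m * (1 - x) ^ n := by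
    intro c hc m n
    rw [intervalIntegral.integral_of_le hc, MeasureTheory.integral_Ioc_eq_integral_Ioo]
  rw [hIoo _ (by norm_num), hIoo _ (by norm_num)]
  have hrefl : (∫ x in (0:ℝ)..(1/2), x ^ (w - 1) * (1 - x) ^ (b - 1)) =
      ∫ x in (1/2 : ℝ)..1, x ^ (b - 1) * (1 - x) ^ (w - 1) := by
    have := intervalIntegral.integral_comp_sub_left
      (a := 0) (b := 1/2) (fun x : ℝ => x ^ (b - 1) * (1 - x) ^ (w - 1)) 1
    norm_num at this
    rw [← this]
    apply intervalIntegral.integral_congr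
    intro x _
    simp only []
    ring_nf
  rw [hrefl]
  have hadd : (∫ x in (0:ℝ)..(1/2), x ^ (b - 1) * (1 - x) ^ (w - 1)) +
      (∫ x in (1/2:ℝ)..1, x ^ (b - 1) * (1 - x) ^ (w - 1)) = Jr (b - 1) (w - 1) := by
    rw [Jr]
    apply intervalIntegral.integral_add_adjacent_intervals <;>
      exact (cont_mn _ _).intervalIntegrable _ _
  linarith

/- ## Rewriting the no-equalization probability -/

lemma r_eq {b w d N : ℕ} (hb : b = w + d) (hw : 1 ≤ w) (hd : 1 ≤ d) (hN : d ≤ N) :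
    ∑ k ∈ Finset.range (N + 1), (c d N k : ℝ) * q b w N k =
      (∑ k ∈ (Finset.range (N + 1)).filter (fun k => 2 * k + 0 ≤ N + d),
        (N.choose k : ℝ) * q w b N k) -
      (∑ k ∈ (Finset.range (N + 1)).filter (fun k => 2 * k + d ≤ N + 0),
        (N.choose k : ℝ) * q b w N k) := by
  have hb1 : 1 ≤ b := by omega
  have hsplit := Finset.sum_filter_add_sum_filter_not (Finset.range (N + 1))
    (fun k => 2 * k + d ≤ N + 0) (fun k => (c d N k : ℝ) * q b w N k)
  have hzero : ∑ k ∈ (Finset.range (N + 1)).filter (fun k => 2 * k + d ≤ N + 0),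
      (c d N k : ℝ) * q b w N k = 0 := by
    apply Finset.sum_eq_zero
    intro k hk
    rw [Finset.mem_filter] at hk
    rw [c_eq_zero (show d + 2 * k ≤ N by omega)]
    simp
  have hmain : ∑ k ∈ (Finset.range (N + 1)).filter (fun k => ¬(2 * k + d ≤ N + 0)),
      (c d N k : ℝ) * q b w N k =
      (∑ k ∈ (Finset.range (N + 1)).filter (fun k => ¬(2 * k + d ≤ N + 0)),
        (N.choose k : ℝ) * q b w N k) -
      (∑ k ∈ (Finset.range (N + 1)).filter (fun k => ¬(2 * k + d ≤ N + 0)),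
        (N.choose (k + d) : ℝ) * q b w N k) := by
    rw [← Finset.sum_sub_distrib]
    apply Finset.sum_congr rfl
    intro k hk
    rw [Finset.mem_filter] at hk
    have hc := c_formula hd N k (by omega)
    have hcast : (c d N k : ℝ) = (N.choose k : ℝ) - (N.choose (k + d) : ℝ) := by
      have h2 := congrArg (Nat.cast : ℕ → ℝ) hc
      push_cast at h2
      linarith
    rw [hcast]
    ring
  have hfirst : ∑ k ∈ (Finset.range (N + 1)).filter (fun k => ¬(2 * k + d ≤ N + 0)),
      (N.choose k : ℝ) * q b w N k =
      1 - ∑ k ∈ (Finset.range (N + 1)).filter (fun k => 2 * k + d ≤ N + 0),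
        (N.choose k : ℝ) * q b w N k := by
    have h3 := Finset.sum_filter_add_sum_filter_not (Finset.range (N + 1))
      (fun k => 2 * k + d ≤ N + 0) (fun k => (N.choose k : ℝ) * q b w N k)
    have h4 := sum_choose_q_total hb1 hw N
    linarith
  -- second sum: reindex
  have hsecond : ∑ k ∈ (Finset.range (N + 1)).filter (fun k => ¬(2 * k + d ≤ N + 0)),
      (N.choose (k + d) : ℝ) * q b w N k =
      1 - ∑ k ∈ (Finset.range (N + 1)).filter (fun k => 2 * k + 0 ≤ N + d),
        (N.choose k : ℝ) * q w b N k := by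
    have hstep1 : ∑ k ∈ (Finset.range (N + 1)).filter (fun k => ¬(2 * k + d ≤ N + 0)),
        (N.choose (k + d) : ℝ) * q b w N k =
        ∑ k ∈ (Finset.range (N + 1)).filter
          (fun k => ¬(2 * k + d ≤ N + 0) ∧ k + d ≤ N), (N.choose (k + d) : ℝ) * q b w N k := by
      symm
      apply Finset.sum_subset
      · intro k hk
        rw [Finset.mem_filter] at hk ⊢
        exact ⟨hk.1, hk.2.1⟩
      · intro k hk hk'
        rw [Finset.mem_filter] at hk hk'
        have hkd : ¬(k + d ≤ N) := by
          intro hc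
          exact hk' ⟨hk.1, hk.2, hc⟩
        rw [Nat.choose_eq_zero_of_lt (by omega)]
        simp
    have hterm : ∀ k ∈ (Finset.range (N + 1)).filter
        (fun k => ¬(2 * k + d ≤ N + 0) ∧ k + d ≤ N),
        (N.choose (k + d) : ℝ) * q b w N k = (N.choose (k + d) : ℝ) * q w b N (k + d) := by
      intro k hk
      rw [Finset.mem_filter, Finset.mem_range] at hk
      have hkN : k ≤ N := by omega
      have hkdN : k + d ≤ N := hk.2.2
      rw [q_eq_Jr hb1 hw hkN, q_eq_Jr hw hb1 hkdN]
      have e1 : b - 1 + k = w - 1 + (k + d) := by omega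
      have e2 : w - 1 + (N - k) = b - 1 + (N - (k + d)) := by omega
      rw [e1, e2, Jr_symm (w - 1) (b - 1)]
    rw [hstep1, Finset.sum_congr rfl hterm]
    have hstep2 : ∑ k ∈ (Finset.range (N + 1)).filter
        (fun k => ¬(2 * k + d ≤ N + 0) ∧ k + d ≤ N),
        (N.choose (k + d) : ℝ) * q w b N (k + d) =
        ∑ j ∈ (Finset.range (N + 1)).filter
          (fun j => ¬(2 * j + 0 ≤ N + d) ∧ d ≤ j), (N.choose j : ℝ) * q w b N j := by
      apply Finset.sum_nbij' (i := fun k => k + d) (j := fun j => j - d)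
      · intro k hk
        rw [Finset.mem_filter, Finset.mem_range] at hk ⊢
        refine ⟨by omega, by omega, by omega⟩
      · intro j hj
        rw [Finset.mem_filter, Finset.mem_range] at hj ⊢
        refine ⟨by omega, by omega, by omega⟩
      · intro k hk
        omega
      · intro j hj
        rw [Finset.mem_filter] at hj
        omega
      · intro k hk
        rfl
    rw [hstep2]
    have hstep3 : ∑ j ∈ (Finset.range (N + 1)).filter
        (fun j => ¬(2 * j + 0 ≤ N + d) ∧ d ≤ j), (N.choose j : ℝ) * q w b N j =
        ∑ j ∈ (Finset.range (N + 1)).filter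
          (fun j => ¬(2 * j + 0 ≤ N + d)), (N.choose j : ℝ) * q w b N j := by
      apply Finset.sum_subset
      · intro j hj
        rw [Finset.mem_filter] at hj ⊢
        exact ⟨hj.1, hj.2.1⟩
      · intro j hj hj'
        rw [Finset.mem_filter, Finset.mem_range] at hj hj'
        exfalso
        apply hj'
        exact ⟨by omega, hj.2, by omega⟩
    rw [hstep3]
    have h3 := Finset.sum_filter_add_sum_filter_not (Finset.range (N + 1))
      (fun j => 2 * j + 0 ≤ N + d) (fun j => (N.choose j : ℝ) * q w b N j)
    have h4 := sum_choose_q_total hw hb1 N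
    linarith
  linarith [hsplit, hzero, hmain, hfirst, hsecond]

/- ## betaCDF in terms of Jr -/

lemma gamma_nat {n : ℕ} (hn : 1 ≤ n) : Real.Gamma (n : ℝ) = Nat.factorial (n - 1) := by
  have : (n : ℝ) = ((n - 1 : ℕ) : ℝ) + 1 := by
    push_cast [Nat.cast_sub hn]
    ring
  rw [this, Real.Gamma_nat_eq_factorial]

lemma betaCDF_eq {b w : ℕ} (hb : 1 ≤ b) (hw : 1 ≤ w) :
    betaCDF b w (1 / 2) =
      (∫ x in Set.Ioo (0:ℝ) (1/2), x ^ (b - 1) * (1 - x) ^ (w - 1)) / Jr (b - 1) (w - 1) := by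
  have hK : Real.Gamma ((b : ℝ) + w) / (Real.Gamma b * Real.Gamma w) =
      1 / Jr (b - 1) (w - 1) := by
    have hbw : 1 ≤ b + w := by omega
    have h1 : Real.Gamma ((b : ℝ) + w) = Nat.factorial (b + w - 1) := by
      rw [show ((b : ℝ) + w) = ((b + w : ℕ) : ℝ) by push_cast; ring, gamma_nat hbw]
    rw [h1, gamma_nat hb, gamma_nat hw, Jr_closed]
    rw [show b - 1 + (w - 1) + 1 = b + w - 1 by omega]
    have n1 : (Nat.factorial (b - 1) : ℝ) ≠ 0 := by exact_mod_cast Nat.factorial_ne_zero _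
    have n2 : (Nat.factorial (w - 1) : ℝ) ≠ 0 := by exact_mod_cast Nat.factorial_ne_zero _
    have n3 : (Nat.factorial (b + w - 1) : ℝ) ≠ 0 := by exact_mod_cast Nat.factorial_ne_zero _
    field_simp
  rw [betaCDF]
  have : ∀ p : ℝ, betaDensity b w p =
      (Real.Gamma ((b : ℝ) + w) / (Real.Gamma b * Real.Gamma w)) *
        (p ^ (b - 1) * (1 - p) ^ (w - 1)) := by
    intro p
    rw [betaDensity]
    ring
  simp only [this, hK]
  rw [MeasureTheory.integral_const_mul]
  ring


end Polya

/-- The probability that a Pólya urn started with `b > w ≥ 1` black/white balls ever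
contains equally many black and white balls is `2·F^Beta_{b,w}(1/2)`. -/
theorem polya_equalization_prob {Ω : Type*} [MeasurableSpace Ω] (P : Measure Ω)
    [IsProbabilityMeasure P] (X : ℕ → Ω → Bool) (b w : ℕ)
    (hbw : b > w) (hw : 1 ≤ w) (hX : IsPolyaUrn P X b w) :
    P {ω | ∃ n, blackCount X b n ω = whiteCount X w n ω} =
      ENNReal.ofReal (2 * betaCDF b w (1 / 2)) := by
  classical
  obtain ⟨d, hd1, hbd⟩ : ∃ d : ℕ, 1 ≤ d ∧ b = w + d := ⟨b - w, by omega, by omega⟩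
  have hb1 : 1 ≤ b := by omega
  set r : ℕ → ℝ := fun N => ∑ k ∈ Finset.range (N + 1),
    (Polya.c d N k : ℝ) * Polya.q b w N k with hrdef
  set A : ℕ → Set Ω := fun N => {ω | ∃ n ≤ N, blackCount X b n ω = whiteCount X w n ω}
    with hAdef
  have hAc : ∀ N, (A N)ᶜ = {ω | ∀ n ≤ N, blackCount X b n ω ≠ whiteCount X w n ω} := by
    intro N
    ext ω
    simp [hAdef]
  have hcompl : ∀ N, P ((A N)ᶜ) = ENNReal.ofReal (r N) := by
    intro N
    rw [hAc N]
    exact Polya.measure_notA hX hbd hd1 hw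
  have hAm : ∀ N, MeasurableSet (A N) := by
    intro N
    rw [← compl_compl (A N)]
    apply MeasurableSet.compl
    rw [hAc N, Polya.notA_eq hbd hd1]
    exact Finset.measurableSet_biUnion _ fun f _ => Polya.measurableSet_drawsEq hX.1 _
  have hr0 : ∀ N, 0 ≤ r N := fun N => Finset.sum_nonneg fun k _ =>
    mul_nonneg (Nat.cast_nonneg _) (Polya.q_nonneg hb1 hw _ _)
  have hPA : ∀ N, P (A N) = ENNReal.ofReal (1 - r N) := by
    intro N
    have h1 : P ((A N)ᶜ) = 1 - P (A N) := prob_compl_eq_one_sub (hAm N)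
    have h2 : P (A N) = 1 - P ((A N)ᶜ) := by
      rw [h1, ENNReal.sub_sub_cancel ENNReal.one_ne_top prob_le_one]
    rw [h2, hcompl N, ← ENNReal.ofReal_one, ← ENNReal.ofReal_sub _ (hr0 N)]
  have hE : {ω | ∃ n, blackCount X b n ω = whiteCount X w n ω} = ⋃ N, A N := by
    ext ω
    simp only [Set.mem_setOf_eq, Set.mem_iUnion, hAdef]
    constructor
    · rintro ⟨n, hn⟩
      exact ⟨n, n, le_rfl, hn⟩
    · rintro ⟨N, n, _, hn⟩
      exact ⟨n, hn⟩
  have hmono : Monotone A := by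
    intro M N h ω hω
    obtain ⟨n, hn, he⟩ := hω
    exact ⟨n, le_trans hn h, he⟩
  have hsup : Filter.Tendsto (fun N => P (A N)) Filter.atTop (nhds (P (⋃ N, A N))) :=
    MeasureTheory.tendsto_measure_iUnion_atTop hmono
  have hF : betaCDF b w (1 / 2) =
      (∫ x in Set.Ioo (0:ℝ) (1/2), x ^ (b - 1) * (1 - x) ^ (w - 1)) /
        Polya.Jr (b - 1) (w - 1) := Polya.betaCDF_eq hb1 hw
  set J0 : ℝ := Polya.Jr (b - 1) (w - 1) with hJ0
  set H : ℝ := ∫ x in Set.Ioo (0:ℝ) (1/2), x ^ (b - 1) * (1 - x) ^ (w - 1) with hH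
  have hLlim := (Polya.tendsto_L w b 0 d hw hb1).sub (Polya.tendsto_L b w d 0 hb1 hw)
  have hval : (∫ x in Set.Ioo (0:ℝ) (1/2), x ^ (w - 1) * (1 - x) ^ (b - 1)) /
      Polya.Jr (w - 1) (b - 1) - H / J0 = 1 - 2 * (H / J0) := by
    rw [Polya.Jr_symm (w - 1) (b - 1), Polya.half_integral_reflect b w, ← hJ0, ← hH]
    rw [sub_div]
    rw [div_self (Polya.Jr_pos _ _).ne']
    ring
  have hrlim : Filter.Tendsto r Filter.atTop (nhds (1 - 2 * (H / J0))) := by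
    rw [← hval]
    apply Filter.Tendsto.congr' _ hLlim
    filter_upwards [Filter.eventually_ge_atTop d] with N hN
    exact (Polya.r_eq hbd hw hd1 hN).symm
  have hfinal : Filter.Tendsto (fun N => P (A N)) Filter.atTop
      (nhds (ENNReal.ofReal (2 * betaCDF b w (1 / 2)))) := by
    simp only [hPA]
    rw [hF]
    have h2 : Filter.Tendsto (fun N => 1 - r N) Filter.atTop (nhds (2 * (H / J0))) := by
      have h3 := (tendsto_const_nhds (x := (1:ℝ)) (f := Filter.atTop (α := ℕ))).sub hrlim
      have h4 : (1:ℝ) - (1 - 2 * (H / J0)) = 2 * (H / J0) := by ring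
      rwa [h4] at h3
    exact (ENNReal.continuous_ofReal.tendsto _).comp h2
  rw [hE]
  exact tendsto_nhds_unique hsup hfinal
end

section
/- For integers b, w ≥ 1 and x ∈ [0,1], the probability that a Beta(b, w)-distributed random variable is at most x equals the probability that a Binomial(b+w−1, x) random variable is at least b; equivalently, ∫_0^x Γ(b+w)/(Γ(b)Γ(w)) p^{b-1}(1-p)^{w-1} dp = Σ_{j=b}^{b+w-1} C(b+w-1, j) x^j (1-x)^{b+w-1-j}. -/
open MeasureTheory ProbabilityTheory Filter

open Finset

private lemma telescope_Icc (h : ℕ → ℝ) (b n : ℕ) (hb : 1 ≤ b) (hbn : b ≤ n) :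
    ∑ j ∈ Finset.Icc b n, (h (j - 1) - h j) = h (b - 1) - h n := by
  induction n with
  | zero => omega
  | succ n ih =>
    rcases Nat.lt_or_ge n b with h1 | h2
    · have hbe : b = n + 1 := by omega
      subst hbe
      simp
    · rw [Finset.sum_Icc_succ_top (by omega), ih h2]
      have e : n + 1 - 1 = n := by omega
      rw [e]; ring

private lemma term_eq (n b : ℕ) (x : ℝ) (j : ℕ) (hj : j ∈ Finset.Icc b n) (hb : 1 ≤ b) :
    (n.choose j : ℝ) * (j * x ^ (j - 1)) * (1 - x) ^ (n - j)
      + (n.choose j : ℝ) * x ^ j * ((n - j : ℕ) * (1 - x) ^ (n - j - 1) * (-1))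
    = (fun k => (n : ℝ) * ((n-1).choose k) * x ^ k * (1 - x) ^ (n - 1 - k)) (j - 1)
      - (fun k => (n : ℝ) * ((n-1).choose k) * x ^ k * (1 - x) ^ (n - 1 - k)) j := by
  simp only [Finset.mem_Icc] at hj
  obtain ⟨hbj, hjn⟩ := hj
  have hj1 : 1 ≤ j := le_trans hb hbj
  have ha : (n.choose j : ℝ) * j = (n : ℝ) * ((n-1).choose (j-1)) := by
    have h := Nat.add_one_mul_choose_eq (n-1) (j-1)
    try simp only [Nat.succ_eq_add_one] at h
    rw [show n-1+1 = n by omega, show j-1+1 = j by omega] at h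
    exact_mod_cast h.symm
  have hb' : (n.choose j : ℝ) * (n - j : ℕ) = (n : ℝ) * ((n-1).choose j) := by
    have h := Nat.choose_mul_succ_eq (n-1) j
    rw [show n-1+1 = n by omega] at h
    have h2 : n.choose j * (n - j) = n * ((n-1).choose j) := by
      rw [mul_comm (n : ℕ)]; exact h.symm
    exact_mod_cast h2
  have e1 : n - 1 - (j - 1) = n - j := by omega
  have e2 : n - j - 1 = n - 1 - j := by omega
  simp only [e1, e2]
  calc (n.choose j : ℝ) * (j * x ^ (j - 1)) * (1 - x) ^ (n - j)
        + (n.choose j : ℝ) * x ^ j * ((n - j : ℕ) * (1 - x) ^ (n - 1 - j) * (-1))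
      = ((n.choose j : ℝ) * j) * x ^ (j - 1) * (1 - x) ^ (n - j)
        - ((n.choose j : ℝ) * (n - j : ℕ)) * x ^ j * (1 - x) ^ (n - 1 - j) := by ring
    _ = _ := by rw [ha, hb']

private lemma sum_hasDerivAt (n b : ℕ) (hb : 1 ≤ b) (hbn : b ≤ n) (x : ℝ) :
    HasDerivAt (fun y => ∑ j ∈ Finset.Icc b n, (n.choose j : ℝ) * y ^ j * (1 - y) ^ (n - j))
      ((n : ℝ) * ((n-1).choose (b-1)) * x ^ (b-1) * (1 - x) ^ (n - b)) x := by
  have hterm : ∀ j ∈ Finset.Icc b n,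
      HasDerivAt (fun y : ℝ => (n.choose j : ℝ) * y ^ j * (1 - y) ^ (n - j))
        ((n.choose j : ℝ) * (j * x ^ (j - 1)) * (1 - x) ^ (n - j)
          + (n.choose j : ℝ) * x ^ j * ((n - j : ℕ) * (1 - x) ^ (n - j - 1) * (-1))) x := by
    intro j hj
    have h1 : HasDerivAt (fun y : ℝ => (n.choose j : ℝ) * y ^ j)
        ((n.choose j : ℝ) * (j * x ^ (j - 1))) x := (hasDerivAt_pow j x).const_mul _
    have h2 : HasDerivAt (fun y : ℝ => (1 - y) ^ (n - j))
        ((n - j : ℕ) * (1 - x) ^ (n - j - 1) * (-1)) x := by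
      have := ((hasDerivAt_id x).const_sub 1).fun_pow (n - j)
      simpa using this
    simpa [mul_comm, mul_assoc, mul_left_comm] using h1.fun_mul h2
  have hsum := HasDerivAt.fun_sum hterm
  have : ∑ j ∈ Finset.Icc b n, ((n.choose j : ℝ) * (j * x ^ (j - 1)) * (1 - x) ^ (n - j)
          + (n.choose j : ℝ) * x ^ j * ((n - j : ℕ) * (1 - x) ^ (n - j - 1) * (-1)))
      = (n : ℝ) * ((n-1).choose (b-1)) * x ^ (b-1) * (1 - x) ^ (n - b) := by
    rw [Finset.sum_congr rfl (fun j hj => term_eq n b x j hj hb)]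
    rw [telescope_Icc (fun k => (n : ℝ) * ((n-1).choose k) * x ^ k * (1 - x) ^ (n - 1 - k)) b n hb hbn]
    have hz : (n-1).choose n = 0 := Nat.choose_eq_zero_of_lt (by omega)
    have e3 : n - 1 - (b - 1) = n - b := by omega
    simp [hz, e3]
  rwa [this] at hsum

/-- The Beta(b,w) CDF at `x` equals the probability that a Binomial(b+w−1, x)
random variable is at least `b`. -/
theorem beta_cdf_eq_binomial_tail (b w : ℕ) (hb : 1 ≤ b) (hw : 1 ≤ w)
    (x : ℝ) (hx : x ∈ Set.Icc (0 : ℝ) 1) :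
    ∫ p in Set.Ioo (0 : ℝ) x,
        Real.Gamma (b + w) / (Real.Gamma b * Real.Gamma w) * p ^ (b - 1) * (1 - p) ^ (w - 1) =
      ∑ j ∈ Finset.Icc b (b + w - 1),
        ((b + w - 1).choose j : ℝ) * x ^ j * (1 - x) ^ (b + w - 1 - j) := by
  obtain ⟨hx0, hx1⟩ := hx
  set n := b + w - 1 with hn
  have hbn : b ≤ n := by omega
  -- the normalizing constant equals n * C(n-1, b-1)
  have hΓbw : Real.Gamma ((b : ℝ) + (w : ℝ)) = n.factorial := by
    have h1 : (n : ℝ) + 1 = (b : ℝ) + w := by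
      have : n + 1 = b + w := by omega
      exact_mod_cast this
    rw [← h1]; exact Real.Gamma_nat_eq_factorial n
  have hΓb : Real.Gamma (b : ℝ) = (b - 1).factorial := by
    have h1 : ((b - 1 : ℕ) : ℝ) + 1 = (b : ℝ) := by
      have : (b - 1) + 1 = b := by omega
      exact_mod_cast this
    rw [← h1]; exact Real.Gamma_nat_eq_factorial (b - 1)
  have hΓw : Real.Gamma (w : ℝ) = (w - 1).factorial := by
    have h1 : ((w - 1 : ℕ) : ℝ) + 1 = (w : ℝ) := by
      have : (w - 1) + 1 = w := by omega
      exact_mod_cast this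
    rw [← h1]; exact Real.Gamma_nat_eq_factorial (w - 1)
  have key : n * ((n - 1).choose (b - 1)) * ((b - 1).factorial * (w - 1).factorial) = n.factorial := by
    have h := Nat.choose_mul_factorial_mul_factorial (show b - 1 ≤ n - 1 by omega)
    rw [show n - 1 - (b - 1) = w - 1 by omega] at h
    calc n * ((n - 1).choose (b - 1)) * ((b - 1).factorial * (w - 1).factorial)
        = n * ((n - 1).choose (b - 1) * (b - 1).factorial * (w - 1).factorial) := by ring
      _ = n * (n - 1).factorial := by rw [h]
      _ = n.factorial := Nat.mul_factorial_pred (by omega)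
  have hc : Real.Gamma ((b : ℝ) + (w : ℝ)) / (Real.Gamma b * Real.Gamma w)
      = (n : ℝ) * ((n - 1).choose (b - 1)) := by
    rw [hΓbw, hΓb, hΓw, div_eq_iff (by positivity)]
    exact_mod_cast key.symm
  -- the integrand is the derivative of the binomial tail sum
  have hderiv : ∀ y ∈ Set.uIcc (0 : ℝ) x,
      HasDerivAt (fun y => ∑ j ∈ Finset.Icc b n, (n.choose j : ℝ) * y ^ j * (1 - y) ^ (n - j))
        (Real.Gamma ((b : ℝ) + (w : ℝ)) / (Real.Gamma b * Real.Gamma w)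
          * y ^ (b - 1) * (1 - y) ^ (w - 1)) y := by
    intro y _
    have h := sum_hasDerivAt n b hb hbn y
    rwa [show n - b = w - 1 by omega, ← hc] at h
  have hcont : Continuous fun p : ℝ =>
      Real.Gamma ((b : ℝ) + (w : ℝ)) / (Real.Gamma b * Real.Gamma w)
        * p ^ (b - 1) * (1 - p) ^ (w - 1) := by fun_prop
  have hint := intervalIntegral.integral_eq_sub_of_hasDerivAt hderiv
    (hcont.intervalIntegrable 0 x)
  rw [← MeasureTheory.integral_Ioc_eq_integral_Ioo, ← intervalIntegral.integral_of_le hx0,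
    hint]
  have hS0 : ∑ j ∈ Finset.Icc b n, (n.choose j : ℝ) * (0:ℝ) ^ j * (1 - (0:ℝ)) ^ (n - j) = 0 :=
    Finset.sum_eq_zero fun j hj => by
      have : j ≠ 0 := by have := (Finset.mem_Icc.mp hj).1; omega
      simp [zero_pow this]
  rw [hS0, sub_zero]
end

section
/- For a Pólya urn started with b black and w white balls with b > w ≥ 1, let S_n = B_n − W_n and Z = lim_n B_n/(b+w+n). If Z < 1/2, then almost surely there exists n with S_n = 0; that is, {Z < 1/2} ⊆ {∃ n, B_n = W_n} up to a null set. -/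
open MeasureTheory ProbabilityTheory Filter

private lemma hit_zero (f : ℕ → ℤ) (hstep : ∀ n, f (n+1) = f n + 1 ∨ f (n+1) = f n - 1)
    (h0 : 0 ≤ f 0) (hneg : ∃ N, f N < 0) : ∃ n, f n = 0 := by
  classical
  have hN : f (Nat.find hneg) < 0 := Nat.find_spec hneg
  have hNpos : Nat.find hneg ≠ 0 := by
    intro h
    rw [h] at hN; omega
  obtain ⟨M, hMeq⟩ := Nat.exists_eq_succ_of_ne_zero hNpos
  rw [hMeq, Nat.succ_eq_add_one] at hN
  have hM : ¬ f M < 0 := Nat.find_min hneg (by omega)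
  rcases hstep M with h | h
  · exact ⟨M, by omega⟩
  · exact ⟨M, by omega⟩

/-- If the limiting black fraction is below 1/2 then equalization occurs: the event
`{Z < 1/2}` is contained in `{∃ n, Bₙ = Wₙ}` up to a null set. -/
theorem polya_lt_half_implies_equalization {Ω : Type*} [MeasurableSpace Ω] (P : Measure Ω)
    [IsProbabilityMeasure P] (X : ℕ → Ω → Bool) (b w : ℕ)
    (hbw : b > w) (hw : 1 ≤ w) (hX : IsPolyaUrn P X b w)
    (Z : Ω → ℝ) (hZm : Measurable Z)
    (hZ : ∀ᵐ ω ∂P, Tendsto (fun n => (blackCount X b n ω : ℝ) / ((b : ℝ) + w + n))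
      atTop (nhds (Z ω))) :
    P ({ω | Z ω < 1 / 2} \ {ω | ∃ n, blackCount X b n ω = whiteCount X w n ω}) = 0 := by
  have hsub : ({ω | Z ω < 1 / 2} \ {ω | ∃ n, blackCount X b n ω = whiteCount X w n ω}) ⊆
      {ω | ¬ Tendsto (fun n => (blackCount X b n ω : ℝ) / ((b : ℝ) + w + n))
        atTop (nhds (Z ω))} := by
    intro ω hω
    simp only [Set.mem_diff, Set.mem_setOf_eq] at hω ⊢
    obtain ⟨hlt, hne⟩ := hω
    intro htend
    apply hne
    -- totals
    have htot : ∀ n, blackCount X b n ω + whiteCount X w n ω = b + w + n := by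
      intro n
      have := Finset.card_filter_add_card_filter_not (s := Finset.range n)
        (p := fun i => X i ω = true)
      simp only [blackCount, whiteCount]
      have heq : (Finset.range n).filter (fun i => ¬ X i ω = true)
          = (Finset.range n).filter (fun i => X i ω = false) := by
        apply Finset.filter_congr
        intro i _
        simp
      rw [heq] at this
      simp only [Finset.card_range] at this
      omega
    -- eventually B_n < W_n
    have hev : ∃ N, blackCount X b N ω < whiteCount X w N ω := by
      have h2 : ∀ᶠ n in atTop, (blackCount X b n ω : ℝ) / ((b : ℝ) + w + n) < 1 / 2 :=
        htend.eventually_lt_const hlt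
      obtain ⟨N, hN⟩ := h2.exists
      refine ⟨N, ?_⟩
      have hpos : (0 : ℝ) < (b : ℝ) + w + N := by positivity
      rw [div_lt_div_iff₀ hpos (by norm_num)] at hN
      have hTr : (blackCount X b N ω : ℝ) + whiteCount X w N ω = (b : ℝ) + w + N := by
        exact_mod_cast htot N
      have : (blackCount X b N ω : ℝ) < whiteCount X w N ω := by linarith
      exact_mod_cast this
    -- step ±1
    set f : ℕ → ℤ := fun n => (blackCount X b n ω : ℤ) - whiteCount X w n ω with hf
    have hstep : ∀ n, f (n+1) = f n + 1 ∨ f (n+1) = f n - 1 := by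
      intro n
      have hb : blackCount X b (n+1) ω =
          blackCount X b n ω + (if X n ω = true then 1 else 0) := by
        simp only [blackCount, Finset.range_add_one, Finset.filter_insert]
        split <;> simp [Finset.card_insert_of_notMem, Finset.mem_filter] <;> omega
      have hwc : whiteCount X w (n+1) ω =
          whiteCount X w n ω + (if X n ω = false then 1 else 0) := by
        simp only [whiteCount, Finset.range_add_one, Finset.filter_insert]
        split <;> simp [Finset.card_insert_of_notMem, Finset.mem_filter] <;> omega
      simp only [hf]
      cases hx : X n ω <;> simp [hx] at hb hwc <;> [right; left] <;> push_cast [hb, hwc] <;> ring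
    have h0 : 0 ≤ f 0 := by
      simp only [hf, blackCount, whiteCount, Finset.range_zero, Finset.filter_empty,
        Finset.card_empty]
      omega
    obtain ⟨N, hN⟩ := hev
    obtain ⟨n, hn⟩ := hit_zero f hstep h0 ⟨N, by simp only [hf]; omega⟩
    exact ⟨n, by simp only [hf] at hn; omega⟩
  refine measure_mono_null hsub ?_
  rw [← ae_iff] at *
  exact hZ
end

section
/- For a Pólya urn started with b black and w white balls (b > w ≥ 1), the equalization probability 2·F^Beta_{b,w}(1/2) is strictly between 0 and 1; in particular P(∃ n, B_n = W_n) < 1. -/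
open MeasureTheory ProbabilityTheory Filter
open Nat

/-! ### Auxiliary lemmas -/

lemma fact_mul_prod (m k : ℕ) : m ! * ∏ j ∈ Finset.range k, (m + 1 + j) = (m + k)! := by
  induction k with
  | zero => simp
  | succ k ih =>
    rw [Finset.prod_range_succ, ← mul_assoc, ih]
    rw [show m + (k+1) = (m + k) + 1 by ring, Nat.factorial_succ]
    ring

lemma beta_nat_integral (m n : ℕ) :
    (∫ x in (0:ℝ)..1, x ^ m * (1 - x) ^ n) = (m ! * n ! : ℝ) / (m + n + 1)! := by
  have h := Complex.betaIntegral_eval_nat_add_one_right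
    (u := (m : ℂ) + 1) (by simp; positivity) n
  rw [Complex.betaIntegral] at h
  have hint : (∫ x in (0:ℝ)..1, (x : ℂ) ^ ((m:ℂ) + 1 - 1) * ((1:ℂ) - x) ^ ((n:ℂ) + 1 - 1))
      = ((∫ x in (0:ℝ)..1, x ^ m * (1 - x) ^ n : ℝ) : ℂ) := by
    rw [← intervalIntegral.integral_ofReal]
    apply intervalIntegral.integral_congr
    intro x _
    show (x:ℂ) ^ ((m:ℂ) + 1 - 1) * ((1:ℂ) - x) ^ ((n:ℂ) + 1 - 1) = _
    rw [show (m:ℂ) + 1 - 1 = ((m : ℕ) : ℂ) by ring,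
      show (n:ℂ) + 1 - 1 = ((n : ℕ) : ℂ) by ring,
      Complex.cpow_natCast, Complex.cpow_natCast]
    push_cast
    ring
  rw [hint] at h
  have hprod : (∏ j ∈ Finset.range (n + 1), ((m:ℂ) + 1 + j)) = ((m + n + 1)! : ℂ) / (m ! : ℂ) := by
    have := fact_mul_prod m (n + 1)
    have hc : ((m ! * ∏ j ∈ Finset.range (n+1), (m + 1 + j) : ℕ) : ℂ) = (((m + (n+1))! : ℕ) : ℂ) := by
      rw [this]
    push_cast at hc
    have hm : (m ! : ℂ) ≠ 0 := by exact_mod_cast Nat.factorial_ne_zero m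
    rw [eq_div_iff hm, mul_comm, show m + n + 1 = m + (n + 1) by omega]
    exact hc
  rw [hprod] at h
  have hm : (m ! : ℂ) ≠ 0 := by exact_mod_cast Nat.factorial_ne_zero m
  have hmn : ((m + n + 1)! : ℂ) ≠ 0 := by exact_mod_cast Nat.factorial_ne_zero _
  have : ((∫ x in (0:ℝ)..1, x ^ m * (1 - x) ^ n : ℝ) : ℂ) = ((m ! * n ! : ℝ) / (m + n + 1)! : ℝ) := by
    rw [h]
    push_cast
    field_simp
  exact_mod_cast this

lemma betaDensity_continuous (b w : ℕ) : Continuous (betaDensity b w) := by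
  unfold betaDensity
  fun_prop

lemma betaDensity_total (b w : ℕ) (hb : 1 ≤ b) (hw : 1 ≤ w) :
    (∫ x in (0:ℝ)..1, betaDensity b w x) = 1 := by
  obtain ⟨m, rfl⟩ : ∃ m, b = m + 1 := ⟨b - 1, by omega⟩
  obtain ⟨n, rfl⟩ : ∃ n, w = n + 1 := ⟨w - 1, by omega⟩
  unfold betaDensity
  simp only [Nat.add_sub_cancel]
  simp only [mul_assoc]
  rw [intervalIntegral.integral_const_mul, beta_nat_integral m n]
  have h1 : ((m:ℝ) + 1) + ((n:ℝ) + 1) = ((m + n + 1 : ℕ) : ℝ) + 1 := by push_cast; ring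
  push_cast
  rw [h1, Real.Gamma_nat_eq_factorial, show ((m:ℝ)+1) = ((m:ℕ):ℝ)+1 by push_cast; ring,
    Real.Gamma_nat_eq_factorial, show ((n:ℝ)+1) = ((n:ℕ):ℝ)+1 by push_cast; ring,
    Real.Gamma_nat_eq_factorial]
  have hm : (m ! : ℝ) ≠ 0 := by exact_mod_cast Nat.factorial_ne_zero m
  have hn : (n ! : ℝ) ≠ 0 := by exact_mod_cast Nat.factorial_ne_zero n
  have hmn : ((m + n + 1)! : ℝ) ≠ 0 := by exact_mod_cast Nat.factorial_ne_zero _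
  field_simp


lemma betaCDF_half_bounds (b w : ℕ) (hbw : b > w) (hw : 1 ≤ w) :
    0 < 2 * betaCDF b w (1 / 2) ∧ 2 * betaCDF b w (1 / 2) < 1 := by
  have hb : 1 ≤ b := by omega
  have hbR : (0:ℝ) < b := by exact_mod_cast Nat.lt_of_lt_of_le Nat.zero_lt_one hb
  have hwR : (0:ℝ) < w := by exact_mod_cast Nat.lt_of_lt_of_le Nat.zero_lt_one hw
  have hC : 0 < Real.Gamma (b + w) / (Real.Gamma b * Real.Gamma w) := by
    have h1 := Real.Gamma_pos_of_pos (show (0:ℝ) < (b:ℝ) + w by positivity)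
    have h2 := Real.Gamma_pos_of_pos hbR
    have h3 := Real.Gamma_pos_of_pos hwR
    positivity
  have hcont := betaDensity_continuous b w
  have hint : ∀ a c : ℝ, IntervalIntegrable (betaDensity b w) volume a c :=
    fun a c => hcont.intervalIntegrable a c
  have hpos : ∀ x ∈ Set.Ioo (0:ℝ) (1/2), 0 < betaDensity b w x := by
    intro x hx
    have hx0 : 0 < x := hx.1
    have h1x : 0 < 1 - x := by have := hx.2; linarith
    unfold betaDensity
    exact mul_pos (mul_pos hC (pow_pos hx0 _)) (pow_pos h1x _)
  have I1pos : 0 < ∫ x in (0:ℝ)..(1/2), betaDensity b w x :=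
    intervalIntegral.intervalIntegral_pos_of_pos_on (hint 0 (1/2)) hpos (by norm_num)
  have hsym : 0 < ∫ x in (0:ℝ)..(1/2), (betaDensity b w (1 - x) - betaDensity b w x) := by
    apply intervalIntegral.intervalIntegral_pos_of_pos_on
    · exact ((hcont.comp (continuous_const.sub continuous_id)).sub hcont).intervalIntegrable 0 (1/2)
    · intro x hx
      have hx0 : 0 < x := hx.1
      have hx2 : x < 1/2 := hx.2
      have h1x : x < 1 - x := by linarith
      have h1x0 : 0 < 1 - x := by linarith
      unfold betaDensity
      rw [show (1:ℝ) - (1 - x) = x by ring]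
      rw [show b - 1 = (w - 1) + (b - w) by omega, pow_add, pow_add]
      have h1 : 0 < Real.Gamma (b + w) / (Real.Gamma b * Real.Gamma w)
          * x ^ (w-1) * (1-x) ^ (w-1) :=
        mul_pos (mul_pos hC (pow_pos hx0 _)) (pow_pos h1x0 _)
      have h2 : x ^ (b-w) < (1-x) ^ (b-w) :=
        pow_lt_pow_left₀ h1x hx0.le (by omega)
      have key := mul_pos h1 (sub_pos.mpr h2)
      have e : Real.Gamma (↑b + ↑w) / (Real.Gamma ↑b * Real.Gamma ↑w)
            * ((1 - x) ^ (w-1) * (1 - x) ^ (b-w)) * x ^ (w-1)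
          - Real.Gamma (↑b + ↑w) / (Real.Gamma ↑b * Real.Gamma ↑w)
            * (x ^ (w-1) * x ^ (b-w)) * (1 - x) ^ (w-1)
          = Real.Gamma (↑b + ↑w) / (Real.Gamma ↑b * Real.Gamma ↑w)
            * x ^ (w-1) * (1-x) ^ (w-1) * ((1-x) ^ (b-w) - x ^ (b-w)) := by ring
      rw [e]
      exact key
    · norm_num
  have hcomp : (∫ x in (0:ℝ)..(1/2), betaDensity b w (1 - x))
      = ∫ x in (1/2:ℝ)..1, betaDensity b w x := by
    have := intervalIntegral.integral_comp_sub_left (a := (0:ℝ)) (b := (1/2:ℝ))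
      (f := betaDensity b w) 1
    rw [this]
    norm_num
  have hsub : (∫ x in (0:ℝ)..(1/2), (betaDensity b w (1 - x) - betaDensity b w x))
      = (∫ x in (0:ℝ)..(1/2), betaDensity b w (1 - x))
        - ∫ x in (0:ℝ)..(1/2), betaDensity b w x :=
    intervalIntegral.integral_sub
      ((hcont.comp (continuous_const.sub continuous_id)).intervalIntegrable 0 (1/2))
      (hint 0 (1/2))
  have hsplit : (∫ x in (0:ℝ)..(1/2), betaDensity b w x)
      + (∫ x in (1/2:ℝ)..1, betaDensity b w x) = ∫ x in (0:ℝ)..1, betaDensity b w x :=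
    intervalIntegral.integral_add_adjacent_intervals (hint 0 (1/2)) (hint (1/2) 1)
  have htot := betaDensity_total b w hb hw
  have hcdf : betaCDF b w (1/2) = ∫ x in (0:ℝ)..(1/2), betaDensity b w x := by
    rw [intervalIntegral.integral_of_le (by norm_num : (0:ℝ) ≤ 1/2),
      MeasureTheory.integral_Ioc_eq_integral_Ioo]
    rfl
  rw [hsub, hcomp] at hsym
  constructor
  · rw [hcdf]; linarith
  · rw [hcdf]; linarith

section Polya

open scoped Classical

/-! ### List-level notions -/

/-- The (conditional) probability weight: fraction of black balls given history `ε`. -/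
noncomputable def fval (b w : ℕ) (ε : List Bool) : ℝ :=
  ((b : ℝ) + ε.count true) / ((b : ℝ) + w + ε.length)

/-- The urn is equalized at the end of history `ε`. -/
def equalAt (b w : ℕ) (ε : List Bool) : Prop :=
  b + ε.count true = w + ε.count false

/-- The urn equalizes at some point along the history `ε`. -/
def hits (b w : ℕ) (ε : List Bool) : Prop := ∃ k, equalAt b w (ε.take k)

/-- The stopped martingale value. -/
noncomputable def gval (b w : ℕ) (ε : List Bool) : ℝ :=
  if hits b w ε then 1/2 else fval b w ε

lemma count_true_add_count_false (ε : List Bool) :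
    ε.count true + ε.count false = ε.length := by
  induction ε with
  | nil => simp
  | cons a l ih => cases a <;> simp [List.count_cons] <;> omega

lemma hits_append (b w : ℕ) (ε : List Bool) (x : Bool) :
    hits b w (ε ++ [x]) ↔ hits b w ε ∨ equalAt b w (ε ++ [x]) := by
  constructor
  · rintro ⟨k, hk⟩
    rcases le_or_gt k ε.length with h | h
    · left; exact ⟨k, by rwa [List.take_append_of_le_length h] at hk⟩
    · right
      rwa [List.take_of_length_le (by simp; omega)] at hk
  · rintro (⟨k, hk⟩ | h)
    · rcases le_or_gt k ε.length with h | h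
      · exact ⟨k, by rwa [List.take_append_of_le_length h]⟩
      · refine ⟨ε.length, ?_⟩
        rw [List.take_append_of_le_length le_rfl, List.take_length]
        rwa [List.take_of_length_le h.le] at hk
    · exact ⟨(ε ++ [x]).length, by rwa [List.take_length]⟩

lemma fval_nonneg (b w : ℕ) (ε : List Bool) : 0 ≤ fval b w ε := by
  unfold fval; positivity

lemma fval_le_one (b w : ℕ) (ε : List Bool) : fval b w ε ≤ 1 := by
  unfold fval
  rcases Nat.eq_zero_or_pos (b + w + ε.length) with h | h
  · obtain ⟨h1, h2⟩ : b = 0 ∧ ε.length = 0 := by omega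
    simp [h1, List.length_eq_zero_iff.mp h2]
  · apply div_le_one_of_le₀
    · have := ε.count_le_length (a := true)
      push_cast
      have : (ε.count true : ℝ) ≤ ε.length := by exact_mod_cast this
      linarith
    · positivity

lemma fval_of_equalAt {b w : ℕ} {ε : List Bool} (hw : 1 ≤ w) (h : equalAt b w ε) :
    fval b w ε = 1/2 := by
  have hc := count_true_add_count_false ε
  unfold equalAt at h
  unfold fval
  have h2 : 2 * (b + ε.count true) = b + w + ε.length := by omega
  have hd : (0:ℝ) < (b:ℝ) + w + ε.length := by
    have : (1:ℝ) ≤ (w:ℝ) := by exact_mod_cast hw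
    positivity
  rw [div_eq_div_iff hd.ne' (by norm_num : (2:ℝ) ≠ 0)]
  have : (2 * (b + ε.count true) : ℕ) = ((b + w + ε.length : ℕ)) := h2
  have := congrArg (fun n : ℕ => (n : ℝ)) this
  push_cast at this
  linarith

lemma not_hits_nil {b w : ℕ} (hbw : b > w) : ¬ hits b w ([] : List Bool) := by
  rintro ⟨k, hk⟩
  simp [equalAt] at hk
  omega

/-! ### Measure-theoretic lemmas -/

variable {Ω : Type*} [MeasurableSpace Ω] {P : Measure Ω} {X : ℕ → Ω → Bool}

lemma mem_drawsEq_iff {ω : Ω} {ε : List Bool} :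
    ω ∈ drawsEq X ε ↔ ∀ k (hk : k < ε.length), X k ω = ε[k] := by
  simp only [drawsEq, Set.mem_setOf_eq]
  rw [List.ext_get_iff]
  simp only [List.length_ofFn, List.get_eq_getElem, List.getElem_ofFn, true_and]
  constructor
  · intro h k hk
    exact h k (by simpa using hk) hk
  · intro h k h1 h2
    exact h k h2

lemma drawsEq_nil : drawsEq X ([] : List Bool) = Set.univ := by
  ext ω; simp [mem_drawsEq_iff]

lemma drawsEq_append (ε : List Bool) (x : Bool) :
    drawsEq X (ε ++ [x]) = drawsEq X ε ∩ {ω | X ε.length ω = x} := by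
  ext ω
  simp only [Set.mem_inter_iff, Set.mem_setOf_eq, mem_drawsEq_iff]
  constructor
  · intro h
    refine ⟨fun k hk => ?_, ?_⟩
    · have := h k (by simp; omega)
      rwa [List.getElem_append_left hk] at this
    · have := h ε.length (by simp)
      rw [List.getElem_append_right le_rfl] at this
      simpa using this
  · rintro ⟨h1, h2⟩ k hk
    rcases lt_or_ge k ε.length with hlt | hge
    · rw [List.getElem_append_left hlt]
      exact h1 k hlt
    · have hke : k = ε.length := by simp at hk; omega
      subst hke
      rw [List.getElem_append_right le_rfl]
      simpa using h2

lemma measurableSet_drawsEq (hm : ∀ i, Measurable (X i)) (ε : List Bool) :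
    MeasurableSet (drawsEq X ε) := by
  induction ε using List.reverseRecOn with
  | nil => rw [drawsEq_nil]; exact MeasurableSet.univ
  | append_singleton ε x ih =>
    rw [drawsEq_append]
    exact ih.inter ((hm ε.length) (MeasurableSet.singleton x))

variable [IsProbabilityMeasure P]

/-- real-valued probability of a history -/
noncomputable def prob (P : Measure Ω) (X : ℕ → Ω → Bool) (ε : List Bool) : ℝ :=
  (P (drawsEq X ε)).toReal

lemma prob_nonneg (ε : List Bool) : 0 ≤ prob P X ε := ENNReal.toReal_nonneg

lemma prob_nil : prob P X ([] : List Bool) = 1 := by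
  rw [prob, drawsEq_nil, measure_univ, ENNReal.toReal_one]

variable {b w : ℕ}

lemma prob_true (hX : IsPolyaUrn P X b w) (ε : List Bool) :
    prob P X (ε ++ [true]) = fval b w ε * prob P X ε := by
  rw [prob, hX.2 ε, ENNReal.toReal_mul,
    ENNReal.toReal_ofReal (by positivity : (0:ℝ) ≤ ((b : ℝ) + ε.count true) / ((b : ℝ) + w + ε.length))]
  rfl

lemma prob_add (hX : IsPolyaUrn P X b w) (ε : List Bool) :
    prob P X (ε ++ [true]) + prob P X (ε ++ [false]) = prob P X ε := by
  unfold prob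
  rw [← ENNReal.toReal_add (measure_ne_top _ _) (measure_ne_top _ _)]
  congr 1
  have hdis : Disjoint (drawsEq X (ε ++ [true])) (drawsEq X (ε ++ [false])) := by
    rw [drawsEq_append, drawsEq_append]
    apply Set.disjoint_left.mpr
    rintro ω ⟨_, h1⟩ ⟨_, h2⟩
    simp only [Set.mem_setOf_eq] at h1 h2
    rw [h1] at h2
    exact Bool.noConfusion h2
  rw [← measure_union hdis (measurableSet_drawsEq hX.1 _)]
  congr 1
  rw [drawsEq_append, drawsEq_append]
  ext ω
  simp only [Set.mem_union, Set.mem_inter_iff, Set.mem_setOf_eq]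
  constructor
  · rintro (⟨h, _⟩ | ⟨h, _⟩) <;> exact h
  · intro h
    cases hx : X ε.length ω
    · right; exact ⟨h, rfl⟩
    · left; exact ⟨h, rfl⟩

lemma prob_false (hX : IsPolyaUrn P X b w) (ε : List Bool) :
    prob P X (ε ++ [false]) = (1 - fval b w ε) * prob P X ε := by
  have h1 := prob_add hX ε
  have h2 := prob_true hX ε
  linarith [h1, h2, sub_mul 1 (fval b w ε) (prob P X ε)]

/-- count and length bookkeeping for `fval` after one more draw -/
lemma martingale_step (hX : IsPolyaUrn P X b w) (hw : 1 ≤ w) (ε : List Bool) :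
    fval b w (ε ++ [true]) * prob P X (ε ++ [true])
      + fval b w (ε ++ [false]) * prob P X (ε ++ [false])
      = fval b w ε * prob P X ε := by
  rw [prob_true hX, prob_false hX]
  unfold fval
  have hct : ((ε ++ [true]).count true : ℝ) = ε.count true + 1 := by
    rw [List.count_append]; push_cast; simp
  have hcf : ((ε ++ [false]).count true : ℝ) = ε.count true := by
    rw [List.count_append]; push_cast; simp
  have hlt : ((ε ++ [true]).length : ℝ) = ε.length + 1 := by
    push_cast [List.length_append, List.length_singleton]; ring
  have hlf : ((ε ++ [false]).length : ℝ) = ε.length + 1 := by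
    push_cast [List.length_append, List.length_singleton]; ring
  rw [hct, hcf, hlt, hlf]
  have hN : (0:ℝ) < (b:ℝ) + w + ε.length := by
    have : (1:ℝ) ≤ (w:ℝ) := by exact_mod_cast hw
    positivity
  have hN1 : (0:ℝ) < (b:ℝ) + w + ε.length + 1 := by linarith
  have hk : (ε.count true : ℝ) ≤ ε.length := by
    exact_mod_cast ε.count_le_length (a := true)
  field_simp
  ring

lemma stopped_step (hX : IsPolyaUrn P X b w) (hbw : b > w) (hw : 1 ≤ w) (ε : List Bool) :
    gval b w (ε ++ [true]) * prob P X (ε ++ [true])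
      + gval b w (ε ++ [false]) * prob P X (ε ++ [false])
      = gval b w ε * prob P X ε := by
  by_cases h : hits b w ε
  · have ht : hits b w (ε ++ [true]) := (hits_append b w ε true).mpr (Or.inl h)
    have hf : hits b w (ε ++ [false]) := (hits_append b w ε false).mpr (Or.inl h)
    simp only [gval, if_pos h, if_pos ht, if_pos hf]
    have := prob_add hX ε
    linarith
  · have key : ∀ x : Bool, gval b w (ε ++ [x]) = fval b w (ε ++ [x]) := by
      intro x
      rw [gval]
      split_ifs with hx
      · rcases (hits_append b w ε x).mp hx with h' | h'
        · exact absurd h' h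
        · exact (fval_of_equalAt hw h').symm
      · rfl
    rw [key true, key false, gval, if_neg h]
    exact martingale_step hX hw ε

/-! ### Sums over draw sequences -/

lemma ofFn_snoc {n : ℕ} (v : Fin n → Bool) (x : Bool) :
    List.ofFn (Fin.snoc v x : Fin (n+1) → Bool) = List.ofFn v ++ [x] := by
  rw [List.ofFn_succ']
  simp [Fin.snoc_castSucc, Fin.snoc_last, List.concat_eq_append]

lemma length_ofFn' {n : ℕ} (v : Fin n → Bool) : (List.ofFn v).length = n := by simp

lemma sum_succ_eq (F : List Bool → ℝ) (n : ℕ) :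
    (∑ v : Fin (n+1) → Bool, F (List.ofFn v))
      = ∑ v : Fin n → Bool, (F (List.ofFn v ++ [true]) + F (List.ofFn v ++ [false])) := by
  rw [← Equiv.sum_comp (Fin.snocEquiv (fun _ => Bool)) (fun v => F (List.ofFn v))]
  rw [Fintype.sum_prod_type]
  rw [Fintype.sum_bool]
  rw [← Finset.sum_add_distrib]
  apply Finset.sum_congr rfl
  intro v _
  simp only [Fin.snocEquiv, Equiv.coe_fn_mk]
  rw [ofFn_snoc, ofFn_snoc]

lemma sum_prob_eq_one (hX : IsPolyaUrn P X b w) (n : ℕ) :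
    (∑ v : Fin n → Bool, prob P X (List.ofFn v)) = 1 := by
  induction n with
  | zero => simp [prob_nil]
  | succ n ih =>
    rw [sum_succ_eq (prob P X) n]
    rw [← ih]
    apply Finset.sum_congr rfl
    intro v _
    exact prob_add hX (List.ofFn v)

lemma sum_gval_prob (hX : IsPolyaUrn P X b w) (hbw : b > w) (hw : 1 ≤ w) (n : ℕ) :
    (∑ v : Fin n → Bool, gval b w (List.ofFn v) * prob P X (List.ofFn v))
      = (b : ℝ) / ((b : ℝ) + w) := by
  induction n with
  | zero =>
    have hv : ∀ v : Fin 0 → Bool, List.ofFn v = ([] : List Bool) := fun v => by simp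
    rw [Fintype.sum_subsingleton _ (fun _ : Fin 0 => true)]
    rw [hv, prob_nil, mul_one, gval, if_neg (not_hits_nil hbw), fval]
    simp
  | succ n ih =>
    rw [sum_succ_eq (fun l => gval b w l * prob P X l) n]
    rw [← ih]
    apply Finset.sum_congr rfl
    intro v _
    exact stopped_step hX hbw hw (List.ofFn v)

lemma hitting_sum_bound (hX : IsPolyaUrn P X b w) (hbw : b > w) (hw : 1 ≤ w) (n : ℕ) :
    (∑ v : Fin n → Bool, (if hits b w (List.ofFn v) then prob P X (List.ofFn v) else 0))
      ≤ 2 * w / ((b : ℝ) + w) := by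
  set H := ∑ v : Fin n → Bool, (if hits b w (List.ofFn v) then prob P X (List.ofFn v) else 0)
    with hH
  have key : (b : ℝ) / ((b : ℝ) + w) ≤ 1 - H / 2 := by
    rw [← sum_gval_prob hX hbw hw n]
    have hterm : ∀ v : Fin n → Bool,
        gval b w (List.ofFn v) * prob P X (List.ofFn v)
          ≤ prob P X (List.ofFn v)
            - (1/2) * (if hits b w (List.ofFn v) then prob P X (List.ofFn v) else 0) := by
      intro v
      by_cases h : hits b w (List.ofFn v)
      · rw [gval, if_pos h, if_pos h]; ring_nf; rfl
      · rw [gval, if_neg h, if_neg h]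
        have := fval_le_one b w (List.ofFn v)
        have hp := prob_nonneg (P := P) (X := X) (List.ofFn v)
        nlinarith
    calc (∑ v : Fin n → Bool, gval b w (List.ofFn v) * prob P X (List.ofFn v))
        ≤ ∑ v : Fin n → Bool, (prob P X (List.ofFn v)
            - (1/2) * (if hits b w (List.ofFn v) then prob P X (List.ofFn v) else 0)) :=
          Finset.sum_le_sum (fun v _ => hterm v)
      _ = 1 - H / 2 := by
          rw [Finset.sum_sub_distrib, sum_prob_eq_one hX, ← Finset.mul_sum, ← hH]
          ring
  have hbw' : (0:ℝ) < (b:ℝ) + w := by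
    have : (1:ℝ) ≤ (w:ℝ) := by exact_mod_cast hw
    positivity
  have : H ≤ 2 * (1 - (b:ℝ) / ((b:ℝ) + w)) := by linarith
  calc H ≤ 2 * (1 - (b:ℝ) / ((b:ℝ) + w)) := this
    _ = 2 * w / ((b:ℝ) + w) := by field_simp; ring

/-! ### Observed draw sequences -/

/-- The observed draw sequence of length `n`. -/
def obs (X : ℕ → Ω → Bool) (n : ℕ) (ω : Ω) : List Bool := List.ofFn (fun i : Fin n => X i ω)

lemma obs_succ (n : ℕ) (ω : Ω) : obs X (n+1) ω = obs X n ω ++ [X n ω] := by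
  rw [obs, List.ofFn_succ', List.concat_eq_append, obs]
  norm_num

lemma length_obs (n : ℕ) (ω : Ω) : (obs X n ω).length = n := by simp [obs]

lemma mem_obs (n : ℕ) (ω : Ω) : ω ∈ drawsEq X (obs X n ω) := by
  rw [mem_drawsEq_iff]
  intro k hk
  simp [obs, List.getElem_ofFn]

lemma eq_obs_of_mem_drawsEq {n : ℕ} {v : Fin n → Bool} {ω : Ω}
    (h : ω ∈ drawsEq X (List.ofFn v)) : List.ofFn v = obs X n ω := by
  apply List.ext_getElem (by simp [obs])
  intro i h1 h2
  have := (mem_drawsEq_iff.mp h) i (by simpa using h1)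
  simp only [obs, List.getElem_ofFn]
  simp only [List.getElem_ofFn] at this ⊢
  exact this.symm

lemma count_obs (y : Bool) (n : ℕ) (ω : Ω) :
    (obs X n ω).count y = ((Finset.range n).filter (fun i => X i ω = y)).card := by
  induction n with
  | zero => simp [obs]
  | succ n ih =>
    rw [obs_succ, List.count_append, ih, Finset.range_add_one, Finset.filter_insert]
    by_cases h : X n ω = y
    · rw [if_pos h, Finset.card_insert_of_notMem (by simp)]
      simp [h]
    · rw [if_neg h]
      simp [List.count_cons, h]

lemma take_obs {k n : ℕ} (h : k ≤ n) (ω : Ω) : (obs X n ω).take k = obs X k ω := by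
  apply List.ext_getElem (by simp [obs]; omega)
  intro i h1 h2
  rw [List.getElem_take]
  simp [obs, List.getElem_ofFn]

lemma hits_obs_iff {b w n : ℕ} (ω : Ω) :
    hits b w (obs X n ω) ↔ ∃ k ≤ n, blackCount X b k ω = whiteCount X w k ω := by
  have hbk : ∀ k, (equalAt b w (obs X k ω) ↔ blackCount X b k ω = whiteCount X w k ω) := by
    intro k
    rw [equalAt, blackCount, whiteCount, count_obs, count_obs]
  constructor
  · rintro ⟨k, hk⟩
    refine ⟨min k n, min_le_right _ _, ?_⟩
    have htk : (obs X n ω).take k = obs X (min k n) ω := by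
      rcases le_total k n with h | h
      · rw [take_obs h, min_eq_left h]
      · rw [List.take_of_length_le (by rw [length_obs]; exact h), min_eq_right h]
    rw [htk] at hk
    exact (hbk _).mp hk
  · rintro ⟨k, hkn, h⟩
    exact ⟨k, by rw [take_obs hkn]; exact (hbk _).mpr h⟩

lemma An_eq {b w : ℕ} (n : ℕ) :
    {ω : Ω | ∃ k ≤ n, blackCount X b k ω = whiteCount X w k ω}
      = ⋃ v ∈ Finset.univ.filter (fun v : Fin n → Bool => hits b w (List.ofFn v)),
          drawsEq X (List.ofFn v) := by
  ext ω
  simp only [Set.mem_iUnion, Finset.mem_filter, Finset.mem_univ, true_and, Set.mem_setOf_eq,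
    exists_prop]
  constructor
  · intro h
    refine ⟨fun i => X i ω, ?_, mem_obs n ω⟩
    exact (hits_obs_iff ω).mpr h
  · rintro ⟨v, hv, hmem⟩
    rw [eq_obs_of_mem_drawsEq hmem] at hv
    exact (hits_obs_iff ω).mp hv

lemma measure_An (hX : IsPolyaUrn P X b w) (n : ℕ) :
    (P {ω : Ω | ∃ k ≤ n, blackCount X b k ω = whiteCount X w k ω}).toReal
      = ∑ v : Fin n → Bool, (if hits b w (List.ofFn v) then prob P X (List.ofFn v) else 0) := by
  rw [An_eq (X := X) (b := b) (w := w) n]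
  rw [measure_biUnion_finset ?hd (fun v _ => measurableSet_drawsEq hX.1 _)]
  · rw [ENNReal.toReal_sum (fun v _ => measure_ne_top _ _)]
    rw [Finset.sum_filter]
    rfl
  case hd =>
    intro v hv v' hv' hne
    apply Set.disjoint_left.mpr
    intro ω h1 h2
    exact hne (List.ofFn_injective ((eq_obs_of_mem_drawsEq h1).trans
      (eq_obs_of_mem_drawsEq h2).symm))

lemma polya_prob_lt_one (hX : IsPolyaUrn P X b w) (hbw : b > w) (hw : 1 ≤ w) :
    P {ω : Ω | ∃ n, blackCount X b n ω = whiteCount X w n ω} < 1 := by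
  set An : ℕ → Set Ω := fun n => {ω | ∃ k ≤ n, blackCount X b k ω = whiteCount X w k ω} with hAn
  have hA : {ω : Ω | ∃ n, blackCount X b n ω = whiteCount X w n ω} = ⋃ n, An n := by
    ext ω
    simp only [Set.mem_setOf_eq, Set.mem_iUnion, hAn]
    constructor
    · rintro ⟨n, h⟩; exact ⟨n, n, le_rfl, h⟩
    · rintro ⟨n, k, _, h⟩; exact ⟨k, h⟩
  have hmono : Monotone An := by
    intro m n hmn ω
    rintro ⟨k, hk, h⟩
    exact ⟨k, hk.trans hmn, h⟩
  have hdir : Directed (· ⊆ ·) An := hmono.directed_le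
  rw [hA, hdir.measure_iUnion]
  have hbound : ∀ n, P (An n) ≤ ENNReal.ofReal (2 * w / ((b:ℝ) + w)) := by
    intro n
    rw [← ENNReal.ofReal_toReal (measure_ne_top P (An n))]
    apply ENNReal.ofReal_le_ofReal
    rw [hAn]
    rw [measure_An hX n]
    exact hitting_sum_bound hX hbw hw n
  calc ⨆ n, P (An n) ≤ ENNReal.ofReal (2 * w / ((b:ℝ) + w)) := iSup_le hbound
    _ < 1 := by
        rw [ENNReal.ofReal_lt_one]
        rw [div_lt_one (by positivity : (0:ℝ) < (b:ℝ) + w)]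
        have hb : (w:ℝ) < b := by exact_mod_cast hbw
        linarith

end Polya


/-- The equalization probability `2·F^Beta_{b,w}(1/2)` of a Pólya urn with `b > w ≥ 1`
is strictly between 0 and 1; in particular equalization is not almost sure. -/
theorem polya_equalization_lt_one {Ω : Type*} [MeasurableSpace Ω] (P : Measure Ω)
    [IsProbabilityMeasure P] (X : ℕ → Ω → Bool) (b w : ℕ)
    (hbw : b > w) (hw : 1 ≤ w) (hX : IsPolyaUrn P X b w) :
    0 < 2 * betaCDF b w (1 / 2) ∧ 2 * betaCDF b w (1 / 2) < 1 ∧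
      P {ω | ∃ n, blackCount X b n ω = whiteCount X w n ω} < 1 := by
  obtain ⟨h1, h2⟩ := betaCDF_half_bounds b w hbw hw
  exact ⟨h1, h2, polya_prob_lt_one hX hbw hw⟩
end
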